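/- arXiv:2601.01351 — 5 statements merged into one kernel-verified Lean document; each statement's English description precedes it below -/
import Mathlib

section
/- Let A be a real symmetric positive semidefinite p×p matrix. Then ‖δ(A)‖ = ‖ZᵀAy‖ ≤ λ_max(ZᵀAZ)^{1/2} · (yᵀAy)^{1/2}. Consequently, if in addition λ_min(ZᵀAZ) > λ_min(WᵀAW), then ‖β̂(A)‖ ≤ UB(A) := λ_max(ZᵀAZ)^{1/2}·(yᵀAy)^{1/2}/(λ_min(ZᵀAZ) − λ_min(WᵀAW)). -/
open Matrix

/-- The spectral norm (operator 2-norm) of a real matrix. -/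
noncomputable def spec {m n : ℕ} (M : Matrix (Fin m) (Fin n) ℝ) : ℝ :=
  ‖LinearMap.toContinuousLinearMap (Matrix.toEuclideanLin M)‖

/-- The smallest (real) eigenvalue of a square real matrix: `sInf` of its real spectrum.
For a symmetric matrix this is the smallest eigenvalue. -/
noncomputable def lmin {n : ℕ} (M : Matrix (Fin n) (Fin n) ℝ) : ℝ :=
  sInf (spectrum ℝ M)

/-- The largest (real) eigenvalue of a square real matrix: `sSup` of its real spectrum. -/
noncomputable def lmax {n : ℕ} (M : Matrix (Fin n) (Fin n) ℝ) : ℝ :=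
  sSup (spectrum ℝ M)

/-- The Euclidean norm of a vector in `ℝ^n`. -/
noncomputable def vnorm {n : ℕ} (v : Fin n → ℝ) : ℝ :=
  Real.sqrt (∑ i, (v i) ^ 2)

/-- `W = (Z, y)`: the `p × (m+1)` matrix obtained by appending `y` as a last column to `Z`. -/
def appendCol {p m : ℕ} (Z : Matrix (Fin p) (Fin m) ℝ) (y : Fin p → ℝ) :
    Matrix (Fin p) (Fin (m + 1)) ℝ :=
  Matrix.of fun i j => Fin.lastCases (y i) (fun k => Z i k) j

/-- `γ(A) = ZᵀAZ − λ_min(WᵀAW)·I_m`. -/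
noncomputable def gam {p m : ℕ} (Z : Matrix (Fin p) (Fin m) ℝ) (y : Fin p → ℝ)
    (A : Matrix (Fin p) (Fin p) ℝ) : Matrix (Fin m) (Fin m) ℝ :=
  Zᵀ * A * Z - lmin ((appendCol Z y)ᵀ * A * appendCol Z y) • (1 : Matrix (Fin m) (Fin m) ℝ)

/-- `δ(A) = ZᵀAy`. -/
noncomputable def del {p m : ℕ} (Z : Matrix (Fin p) (Fin m) ℝ) (y : Fin p → ℝ)
    (A : Matrix (Fin p) (Fin p) ℝ) : Fin m → ℝ :=
  (Zᵀ * A) *ᵥ y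

/-- The weighted total least squares estimator `β̂(A) = γ(A)⁻¹ δ(A)`. -/
noncomputable def betahat {p m : ℕ} (Z : Matrix (Fin p) (Fin m) ℝ) (y : Fin p → ℝ)
    (A : Matrix (Fin p) (Fin p) ℝ) : Fin m → ℝ :=
  (gam Z y A)⁻¹ *ᵥ del Z y A

lemma dot_shift {n k : ℕ} (B : Matrix (Fin n) (Fin k) ℝ) (v : Fin n → ℝ) (x : Fin k → ℝ) :
    (Bᵀ *ᵥ v) ⬝ᵥ x = v ⬝ᵥ (B *ᵥ x) := by
  rw [mulVec_transpose, dotProduct_mulVec]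

lemma dot_shift' {n k : ℕ} (B : Matrix (Fin n) (Fin k) ℝ) (x : Fin k → ℝ) (z : Fin n → ℝ) :
    (B *ᵥ x) ⬝ᵥ z = x ⬝ᵥ (Bᵀ *ᵥ z) := by
  have := dot_shift Bᵀ x z
  rwa [transpose_transpose] at this

lemma dot_self_eq {n : ℕ} (v : Fin n → ℝ) : v ⬝ᵥ v = ∑ i, v i ^ 2 := by
  simp [dotProduct, sq]

lemma dot_self_nonneg {n : ℕ} (v : Fin n → ℝ) : 0 ≤ v ⬝ᵥ v := by
  rw [dot_self_eq]; positivity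

lemma vnorm_eq {n : ℕ} (v : Fin n → ℝ) : vnorm v = Real.sqrt (v ⬝ᵥ v) := by
  rw [vnorm, dot_self_eq]

lemma vnorm_nonneg {n : ℕ} (v : Fin n → ℝ) : 0 ≤ vnorm v := Real.sqrt_nonneg _

lemma vnorm_sq {n : ℕ} (v : Fin n → ℝ) : vnorm v ^ 2 = v ⬝ᵥ v := by
  rw [vnorm_eq, Real.sq_sqrt (dot_self_nonneg v)]

lemma dot_le {n : ℕ} (v u : Fin n → ℝ) : v ⬝ᵥ u ≤ vnorm v * vnorm u := by
  have h := Finset.sum_mul_sq_le_sq_mul_sq Finset.univ v u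
  calc v ⬝ᵥ u ≤ |v ⬝ᵥ u| := le_abs_self _
    _ = Real.sqrt ((v ⬝ᵥ u) ^ 2) := (Real.sqrt_sq_eq_abs _).symm
    _ ≤ Real.sqrt ((v ⬝ᵥ v) * (u ⬝ᵥ u)) := by
        apply Real.sqrt_le_sqrt
        rw [dot_self_eq, dot_self_eq]
        exact h
    _ = vnorm v * vnorm u := by
        rw [Real.sqrt_mul (dot_self_nonneg v), vnorm_eq, vnorm_eq]

lemma eig_le_lmax {n : ℕ} {M : Matrix (Fin n) (Fin n) ℝ} (hM : M.IsHermitian) (i : Fin n) :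
    hM.eigenvalues i ≤ lmax M :=
  le_csSup (Set.Finite.bddAbove M.finite_real_spectrum) (hM.eigenvalues_mem_spectrum_real i)

lemma lmin_le_eig {n : ℕ} {M : Matrix (Fin n) (Fin n) ℝ} (hM : M.IsHermitian) (i : Fin n) :
    lmin M ≤ hM.eigenvalues i :=
  csInf_le (Set.Finite.bddBelow M.finite_real_spectrum) (hM.eigenvalues_mem_spectrum_real i)

lemma rayleigh_aux {n : ℕ} {M : Matrix (Fin n) (Fin n) ℝ} (hM : M.IsHermitian) (v : Fin n → ℝ) :
    ∃ w : Fin n → ℝ, v ⬝ᵥ M *ᵥ v = ∑ i, hM.eigenvalues i * w i ^ 2 ∧ v ⬝ᵥ v = ∑ i, w i ^ 2 := by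
  set U : Matrix (Fin n) (Fin n) ℝ := (hM.eigenvectorUnitary : Matrix (Fin n) (Fin n) ℝ) with hUdef
  have hU : U * star U = 1 := (Matrix.mem_unitaryGroup_iff).mp hM.eigenvectorUnitary.2
  have hsU : star U = Uᵀ := by
    rw [Matrix.star_eq_conjTranspose, Matrix.conjTranspose_eq_transpose_of_trivial]
  refine ⟨Uᵀ *ᵥ v, ?_, ?_⟩
  · conv_lhs => rw [hM.spectral_theorem, Unitary.conjStarAlgAut_apply]
    rw [← hUdef, hsU, ← mulVec_mulVec, ← mulVec_mulVec, ← dot_shift]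
    simp [dotProduct, mulVec_diagonal, RCLike.ofReal_real_eq_id, sq]
    exact Finset.sum_congr rfl fun i _ => by ring
  · have h := dot_shift U v (Uᵀ *ᵥ v)
    rw [mulVec_mulVec] at h
    have hUU : U * Uᵀ = 1 := by rw [← hsU]; exact hU
    rw [hUU, one_mulVec] at h
    rw [← dot_self_eq, ← h]

lemma rayleigh_le {n : ℕ} {M : Matrix (Fin n) (Fin n) ℝ} (hM : M.IsHermitian) (v : Fin n → ℝ) :
    v ⬝ᵥ M *ᵥ v ≤ lmax M * (v ⬝ᵥ v) := by
  obtain ⟨w, h1, h2⟩ := rayleigh_aux hM v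
  rw [h1, h2, Finset.mul_sum]
  exact Finset.sum_le_sum fun i _ =>
    mul_le_mul_of_nonneg_right (eig_le_lmax hM i) (sq_nonneg _)

lemma rayleigh_ge {n : ℕ} {M : Matrix (Fin n) (Fin n) ℝ} (hM : M.IsHermitian) (v : Fin n → ℝ) :
    lmin M * (v ⬝ᵥ v) ≤ v ⬝ᵥ M *ᵥ v := by
  obtain ⟨w, h1, h2⟩ := rayleigh_aux hM v
  rw [h1, h2, Finset.mul_sum]
  exact Finset.sum_le_sum fun i _ =>
    mul_le_mul_of_nonneg_right (lmin_le_eig hM i) (sq_nonneg _)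

lemma psd_conj {p m : ℕ} {A : Matrix (Fin p) (Fin p) ℝ} (hA : A.PosSemidef)
    (Z : Matrix (Fin p) (Fin m) ℝ) : (Zᵀ * A * Z).PosSemidef := by
  have h := hA.conjTranspose_mul_mul_same (B := Z)
  rwa [Matrix.conjTranspose_eq_transpose_of_trivial] at h

lemma lmax_nonneg {n : ℕ} (hn : 0 < n) {M : Matrix (Fin n) (Fin n) ℝ} (hM : M.PosSemidef) :
    0 ≤ lmax M :=
  le_trans (hM.eigenvalues_nonneg ⟨0, hn⟩) (eig_le_lmax hM.1 ⟨0, hn⟩)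

lemma del_bound {p m : ℕ} (hm : 0 < m) (Z : Matrix (Fin p) (Fin m) ℝ) (y : Fin p → ℝ)
    (A : Matrix (Fin p) (Fin p) ℝ) (hA : A.PosSemidef) :
    vnorm (del Z y A) ≤ Real.sqrt (lmax (Zᵀ * A * Z)) * Real.sqrt (y ⬝ᵥ A *ᵥ y) := by
  obtain ⟨S, hS, hSh⟩ : ∃ S : Matrix (Fin p) (Fin p) ℝ, S * S = A ∧ Sᵀ = S :=
    open scoped MatrixOrder in
    ⟨CFC.sqrt A, CFC.sqrt_mul_sqrt_self A hA.nonneg,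
      (Matrix.conjTranspose_eq_transpose_of_trivial _).symm.trans (CFC.sqrt_nonneg A).posSemidef.1⟩
  set w := del Z y A with hw
  set u := S *ᵥ y with hu
  set N := S * Z with hN
  have hNT : Nᵀ = Zᵀ * S := by rw [hN, Matrix.transpose_mul, hSh]
  have hwN : w = Nᵀ *ᵥ u := by
    rw [hw, hNT, hu, mulVec_mulVec, Matrix.mul_assoc, hS]; rfl
  have hNN : Nᵀ * N = Zᵀ * A * Z := by
    rw [hNT, hN, ← Matrix.mul_assoc, Matrix.mul_assoc Zᵀ S S, hS]
  have hpsd : (Zᵀ * A * Z).PosSemidef := psd_conj hA Z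
  have huu : u ⬝ᵥ u = y ⬝ᵥ A *ᵥ y := by
    conv_lhs => rw [hu, ← hSh]
    rw [dot_shift, mulVec_mulVec, hSh, hS]
  set L := lmax (Zᵀ * A * Z) with hL
  have hL0 : 0 ≤ L := lmax_nonneg hm hpsd
  have hkey : (N *ᵥ w) ⬝ᵥ (N *ᵥ w) ≤ L * (w ⬝ᵥ w) := by
    rw [dot_shift', mulVec_mulVec, hNN]
    exact rayleigh_le hpsd.1 w
  have hNw : vnorm (N *ᵥ w) ≤ Real.sqrt L * vnorm w := by
    rw [vnorm_eq]
    calc Real.sqrt ((N *ᵥ w) ⬝ᵥ (N *ᵥ w)) ≤ Real.sqrt (L * (w ⬝ᵥ w)) := Real.sqrt_le_sqrt hkey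
      _ = Real.sqrt L * vnorm w := by rw [Real.sqrt_mul hL0, vnorm_eq]
  have hun : vnorm u = Real.sqrt (y ⬝ᵥ A *ᵥ y) := by rw [vnorm_eq, huu]
  have hchain : vnorm w ^ 2 ≤ (Real.sqrt L * Real.sqrt (y ⬝ᵥ A *ᵥ y)) * vnorm w := by
    calc vnorm w ^ 2 = w ⬝ᵥ w := vnorm_sq w
      _ = (N *ᵥ w) ⬝ᵥ u := by rw [dot_shift' N w u, ← hwN]
      _ ≤ vnorm (N *ᵥ w) * vnorm u := dot_le _ _
      _ ≤ (Real.sqrt L * vnorm w) * vnorm u :=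
          mul_le_mul_of_nonneg_right hNw (vnorm_nonneg u)
      _ = (Real.sqrt L * Real.sqrt (y ⬝ᵥ A *ᵥ y)) * vnorm w := by rw [hun]; ring
  rcases eq_or_lt_of_le (vnorm_nonneg w) with h0 | h0
  · rw [← h0]; positivity
  · have := hchain
    rw [sq] at this
    exact le_of_mul_le_mul_right this h0

/-- For `A` symmetric positive semidefinite:
`‖δ(A)‖ = ‖ZᵀAy‖ ≤ λ_max(ZᵀAZ)^{1/2}·(yᵀAy)^{1/2}`; and if moreover
`λ_min(ZᵀAZ) > λ_min(WᵀAW)`, then `‖β̂(A)‖ ≤ UB(A)`. -/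
theorem stmt2 {p m : ℕ} (hp : 0 < p) (hm : 0 < m)
    (Z : Matrix (Fin p) (Fin m) ℝ) (y : Fin p → ℝ)
    (A : Matrix (Fin p) (Fin p) ℝ) (hA : A.PosSemidef) :
    vnorm (del Z y A) ≤ Real.sqrt (lmax (Zᵀ * A * Z)) * Real.sqrt (y ⬝ᵥ A *ᵥ y) ∧
      (lmin ((appendCol Z y)ᵀ * A * appendCol Z y) < lmin (Zᵀ * A * Z) →
        vnorm (betahat Z y A) ≤
          Real.sqrt (lmax (Zᵀ * A * Z)) * Real.sqrt (y ⬝ᵥ A *ᵥ y) /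
            (lmin (Zᵀ * A * Z) - lmin ((appendCol Z y)ᵀ * A * appendCol Z y))) := by
  refine ⟨del_bound hm Z y A hA, fun hlt => ?_⟩
  set lam := lmin ((appendCol Z y)ᵀ * A * appendCol Z y) with hlam
  set mu := lmin (Zᵀ * A * Z) with hmu
  set c := mu - lam with hc
  have hcpos : 0 < c := sub_pos.mpr hlt
  have hpsd : (Zᵀ * A * Z).PosSemidef := psd_conj hA Z
  have hZh : (Zᵀ * A * Z).IsHermitian := hpsd.1
  set G := gam Z y A with hG
  have hGeq : G = Zᵀ * A * Z - lam • (1 : Matrix (Fin m) (Fin m) ℝ) := rfl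
  have hGh : G.IsHermitian := by
    rw [Matrix.IsHermitian, hGeq, conjTranspose_sub, conjTranspose_smul, conjTranspose_one,
      hZh.eq]
    norm_num
  have hkey : ∀ v : Fin m → ℝ, c * (v ⬝ᵥ v) ≤ v ⬝ᵥ G *ᵥ v := by
    intro v
    have h1 : v ⬝ᵥ G *ᵥ v = v ⬝ᵥ (Zᵀ * A * Z) *ᵥ v - lam * (v ⬝ᵥ v) := by
      rw [hGeq, sub_mulVec, dotProduct_sub, smul_mulVec, one_mulVec, dotProduct_smul,
        smul_eq_mul]
    have h2 := rayleigh_ge hZh v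
    rw [h1, hc]
    rw [← hmu] at h2
    nlinarith [dot_self_nonneg v]
  have hGpd : G.PosDef := by
    refine Matrix.PosDef.of_dotProduct_mulVec_pos hGh fun v hv => ?_
    have hvv : 0 < v ⬝ᵥ v :=
      lt_of_le_of_ne (dot_self_nonneg v) (fun h => hv (dotProduct_self_eq_zero.mp h.symm))
    calc (0:ℝ) < c * (v ⬝ᵥ v) := mul_pos hcpos hvv
      _ ≤ v ⬝ᵥ G *ᵥ v := hkey v
      _ = star v ⬝ᵥ G *ᵥ v := by rw [star_trivial]
  have hunit : IsUnit G.det := isUnit_iff_ne_zero.mpr hGpd.det_pos.ne'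
  set x := betahat Z y A with hx
  have hGx : G *ᵥ x = del Z y A := by
    rw [hx, betahat, ← hG, mulVec_mulVec, Matrix.mul_nonsing_inv G hunit, one_mulVec]
  set R := Real.sqrt (lmax (Zᵀ * A * Z)) * Real.sqrt (y ⬝ᵥ A *ᵥ y) with hR
  have hR0 : 0 ≤ R := by rw [hR]; positivity
  have hchain : c * (vnorm x * vnorm x) ≤ R * vnorm x := by
    calc c * (vnorm x * vnorm x) = c * (vnorm x ^ 2) := by ring
      _ = c * (x ⬝ᵥ x) := by rw [vnorm_sq]
      _ ≤ x ⬝ᵥ G *ᵥ x := hkey x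
      _ = x ⬝ᵥ del Z y A := by rw [hGx]
      _ ≤ vnorm x * vnorm (del Z y A) := dot_le _ _
      _ ≤ vnorm x * R := mul_le_mul_of_nonneg_left (del_bound hm Z y A hA) (vnorm_nonneg x)
      _ = R * vnorm x := mul_comm _ _
  rcases eq_or_lt_of_le (vnorm_nonneg x) with h0 | h0
  · rw [← h0]
    positivity
  · rw [le_div_iff₀ hcpos]
    have : (c * vnorm x) * vnorm x ≤ R * vnorm x := by nlinarith [hchain]
    have h2 := le_of_mul_le_mul_right this h0
    linarith
end

section
/- Let A be a real symmetric positive definite p×p matrix with λ_min(ZᵀAZ) > λ_min(WᵀAW), let B be a real symmetric p×p matrix, and suppose Δ̂ := Δ̂(B,A) < 1. Then γ(B) is invertible (so β̂(B) is well defined) and satisfies ‖γ(B)^{-1}‖ ≤ (1/(1−Δ̂)) · 1/(λ_min(ZᵀAZ) − λ_min(WᵀAW)) and ‖γ(B)^{-1} − γ(A)^{-1}‖ ≤ (Δ̂/(1−Δ̂)) · 1/(λ_min(ZᵀAZ) − λ_min(WᵀAW)). -/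
open Matrix

/-- `Δ̂(B,A) = [(λ_max(ZᵀAZ) + λ_max(WᵀAW))/(λ_min(ZᵀAZ) − λ_min(WᵀAW))] · ‖A⁻¹‖·‖B−A‖`. -/
noncomputable def Deltahat {p m : ℕ} (Z : Matrix (Fin p) (Fin m) ℝ) (y : Fin p → ℝ)
    (A B : Matrix (Fin p) (Fin p) ℝ) : ℝ :=
  (lmax (Zᵀ * A * Z) + lmax ((appendCol Z y)ᵀ * A * appendCol Z y)) /
      (lmin (Zᵀ * A * Z) - lmin ((appendCol Z y)ᵀ * A * appendCol Z y)) *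
    (spec A⁻¹ * spec (B - A))

/-- `UB(A) = λ_max(ZᵀAZ)^{1/2}·(yᵀAy)^{1/2}/(λ_min(ZᵀAZ) − λ_min(WᵀAW))`. -/
noncomputable def UB {p m : ℕ} (Z : Matrix (Fin p) (Fin m) ℝ) (y : Fin p → ℝ)
    (A : Matrix (Fin p) (Fin p) ℝ) : ℝ :=
  Real.sqrt (lmax (Zᵀ * A * Z)) * Real.sqrt (y ⬝ᵥ A *ᵥ y) /
    (lmin (Zᵀ * A * Z) - lmin ((appendCol Z y)ᵀ * A * appendCol Z y))

section Aux
open scoped Matrix.Norms.L2Operator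

namespace SpecAux

noncomputable def toE {n : ℕ} (x : Fin n → ℝ) : EuclideanSpace ℝ (Fin n) := WithLp.toLp 2 x

lemma spec_eq_norm {m n : ℕ} (M : Matrix (Fin m) (Fin n) ℝ) : spec M = ‖M‖ := rfl

lemma inner_toE {n : ℕ} (x y : Fin n → ℝ) : @inner ℝ _ _ (toE x) (toE y) = x ⬝ᵥ y := by
  simp [toE, PiLp.inner_apply, dotProduct, RCLike.inner_apply]
  exact Finset.sum_congr rfl fun i _ => mul_comm _ _

lemma norm_toE_sq {n : ℕ} (x : Fin n → ℝ) : ‖toE x‖ ^ 2 = x ⬝ᵥ x := by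
  rw [← real_inner_self_eq_norm_sq, inner_toE]

lemma norm_mulVec_le {m n : ℕ} (M : Matrix (Fin m) (Fin n) ℝ) (x : Fin n → ℝ) :
    ‖toE (M *ᵥ x)‖ ≤ ‖M‖ * ‖toE x‖ :=
  M.l2_opNorm_mulVec (toE x)

lemma norm_le_of_bound {m n : ℕ} (M : Matrix (Fin m) (Fin n) ℝ) {c : ℝ} (hc : 0 ≤ c)
    (h : ∀ x : Fin n → ℝ, ‖toE (M *ᵥ x)‖ ≤ c * ‖toE x‖) : ‖M‖ ≤ c := by
  rw [Matrix.l2_opNorm_def]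
  exact ContinuousLinearMap.opNorm_le_bound _ hc fun x => h x

lemma norm_one_le {n : ℕ} : ‖(1 : Matrix (Fin n) (Fin n) ℝ)‖ ≤ 1 :=
  norm_le_of_bound _ zero_le_one fun x => by rw [Matrix.one_mulVec, one_mul]

variable {n : ℕ} {M : Matrix (Fin n) (Fin n) ℝ}

lemma lmin_le (hM : M.IsHermitian) (i : Fin n) : lmin M ≤ hM.eigenvalues i := by
  rw [lmin, hM.spectrum_real_eq_range_eigenvalues]
  exact csInf_le (Set.finite_range _).bddBelow ⟨i, rfl⟩

lemma le_lmax (hM : M.IsHermitian) (i : Fin n) : hM.eigenvalues i ≤ lmax M := by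
  rw [lmax, hM.spectrum_real_eq_range_eigenvalues]
  exact le_csSup (Set.finite_range _).bddAbove ⟨i, rfl⟩

lemma exists_lmin [NeZero n] (hM : M.IsHermitian) : ∃ i, hM.eigenvalues i = lmin M := by
  have h : lmin M ∈ Set.range hM.eigenvalues := by
    rw [lmin, hM.spectrum_real_eq_range_eigenvalues]
    exact (Set.range_nonempty _).csInf_mem (Set.finite_range _)
  obtain ⟨i, hi⟩ := h
  exact ⟨i, hi⟩

lemma herm_transpose (hM : M.IsHermitian) : Mᵀ = M := by
  rw [← M.conjTranspose_eq_transpose_of_trivial, hM.eq]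

lemma dot_eig (hM : M.IsHermitian) (x : Fin n → ℝ) (i : Fin n) :
    ⇑(hM.eigenvectorBasis i) ⬝ᵥ (M *ᵥ x) =
      hM.eigenvalues i * (⇑(hM.eigenvectorBasis i) ⬝ᵥ x) := by
  rw [dotProduct_mulVec, ← mulVec_transpose, herm_transpose hM, hM.mulVec_eigenvectorBasis,
    smul_dotProduct, smul_eq_mul]

lemma quad_eq_sum (hM : M.IsHermitian) (x : Fin n → ℝ) :
    x ⬝ᵥ (M *ᵥ x) = ∑ i, hM.eigenvalues i * (⇑(hM.eigenvectorBasis i) ⬝ᵥ x) ^ 2 := by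
  rw [← inner_toE x (M *ᵥ x), ← (hM.eigenvectorBasis).sum_inner_mul_inner (toE x) (toE (M *ᵥ x))]
  refine Finset.sum_congr rfl fun i _ => ?_
  have h1 : @inner ℝ _ _ (toE x) (hM.eigenvectorBasis i) = ⇑(hM.eigenvectorBasis i) ⬝ᵥ x := by
    rw [dotProduct_comm]; exact inner_toE x _
  have h2 : @inner ℝ _ _ ((hM.eigenvectorBasis i : EuclideanSpace ℝ (Fin n))) (toE (M *ᵥ x)) =
      ⇑(hM.eigenvectorBasis i) ⬝ᵥ (M *ᵥ x) := inner_toE _ _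
  rw [h1, h2, dot_eig hM]
  ring

lemma dotself_eq_sum (hM : M.IsHermitian) (x : Fin n → ℝ) :
    x ⬝ᵥ x = ∑ i, (⇑(hM.eigenvectorBasis i) ⬝ᵥ x) ^ 2 := by
  rw [← inner_toE x x, ← (hM.eigenvectorBasis).sum_inner_mul_inner (toE x) (toE x)]
  refine Finset.sum_congr rfl fun i _ => ?_
  have h1 : @inner ℝ _ _ (toE x) (hM.eigenvectorBasis i) = ⇑(hM.eigenvectorBasis i) ⬝ᵥ x := by
    rw [dotProduct_comm]; exact inner_toE x _
  have h2 : @inner ℝ _ _ ((hM.eigenvectorBasis i : EuclideanSpace ℝ (Fin n))) (toE x) =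
      ⇑(hM.eigenvectorBasis i) ⬝ᵥ x := inner_toE _ _
  rw [h1, h2, sq]

lemma quad_ge (hM : M.IsHermitian) (x : Fin n → ℝ) :
    lmin M * (x ⬝ᵥ x) ≤ x ⬝ᵥ (M *ᵥ x) := by
  rw [quad_eq_sum hM, dotself_eq_sum hM, Finset.mul_sum]
  exact Finset.sum_le_sum fun i _ => mul_le_mul_of_nonneg_right (lmin_le hM i) (sq_nonneg _)

lemma quad_le (hM : M.IsHermitian) (x : Fin n → ℝ) :
    x ⬝ᵥ (M *ᵥ x) ≤ lmax M * (x ⬝ᵥ x) := by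
  rw [quad_eq_sum hM, dotself_eq_sum hM, Finset.mul_sum]
  exact Finset.sum_le_sum fun i _ => mul_le_mul_of_nonneg_right (le_lmax hM i) (sq_nonneg _)

lemma quad_abs_le (D : Matrix (Fin n) (Fin n) ℝ) (x : Fin n → ℝ) :
    x ⬝ᵥ (D *ᵥ x) ≤ ‖D‖ * (x ⬝ᵥ x) := by
  have h1 : x ⬝ᵥ (D *ᵥ x) ≤ ‖toE x‖ * ‖toE (D *ᵥ x)‖ := by
    rw [← inner_toE]; exact real_inner_le_norm _ _
  have h2 := norm_mulVec_le D x
  have h3 := norm_toE_sq x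
  calc x ⬝ᵥ (D *ᵥ x) ≤ ‖toE x‖ * ‖toE (D *ᵥ x)‖ := h1
    _ ≤ ‖toE x‖ * (‖D‖ * ‖toE x‖) := mul_le_mul_of_nonneg_left h2 (norm_nonneg _)
    _ = ‖D‖ * (x ⬝ᵥ x) := by rw [← h3]; ring

lemma basis_unit (hM : M.IsHermitian) (i : Fin n) :
    ⇑(hM.eigenvectorBasis i) ⬝ᵥ ⇑(hM.eigenvectorBasis i) = 1 := by
  have h := hM.eigenvectorBasis.orthonormal.1 i
  have := norm_toE_sq (⇑(hM.eigenvectorBasis i))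
  rw [show toE ⇑(hM.eigenvectorBasis i) = hM.eigenvectorBasis i from rfl, h] at this
  rw [← this]; norm_num

/-- One-sided Weyl bound. -/
lemma lmin_le_lmin_add {S T : Matrix (Fin n) (Fin n) ℝ} [NeZero n]
    (hS : S.IsHermitian) (hT : T.IsHermitian) : lmin S ≤ lmin T + ‖S - T‖ := by
  obtain ⟨i, hi⟩ := exists_lmin hT
  set v : Fin n → ℝ := ⇑(hT.eigenvectorBasis i) with hv
  have hvv : v ⬝ᵥ v = 1 := basis_unit hT i
  have h1 : lmin S ≤ v ⬝ᵥ (S *ᵥ v) := by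
    have := quad_ge hS v
    rwa [hvv, mul_one] at this
  have h2 : v ⬝ᵥ (T *ᵥ v) = lmin T := by
    rw [hv, dot_eig hT, ← hv, hvv, mul_one, hi]
  have h3 : v ⬝ᵥ ((S - T) *ᵥ v) ≤ ‖S - T‖ := by
    have := quad_abs_le (S - T) v
    rwa [hvv, mul_one] at this
  have h4 : S *ᵥ v = T *ᵥ v + (S - T) *ᵥ v := by
    rw [← Matrix.add_mulVec, add_sub_cancel]
  calc lmin S ≤ v ⬝ᵥ (S *ᵥ v) := h1
    _ = v ⬝ᵥ (T *ᵥ v) + v ⬝ᵥ ((S - T) *ᵥ v) := by rw [h4, dotProduct_add]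
    _ ≤ lmin T + ‖S - T‖ := by rw [h2]; exact add_le_add_right h3 _

lemma abs_lmin_sub_le {S T : Matrix (Fin n) (Fin n) ℝ} [NeZero n]
    (hS : S.IsHermitian) (hT : T.IsHermitian) : |lmin S - lmin T| ≤ ‖S - T‖ := by
  rw [abs_le]
  constructor
  · have := lmin_le_lmin_add hT hS
    rw [norm_sub_rev] at this
    linarith
  · have := lmin_le_lmin_add hS hT
    linarith

/-- Invertibility and inverse-norm bound for a matrix with coercive quadratic form. -/
lemma inv_bound {G : Matrix (Fin n) (Fin n) ℝ} (hG : G.IsHermitian) {g : ℝ} (hg : 0 < g)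
    (hq : ∀ x : Fin n → ℝ, g * (x ⬝ᵥ x) ≤ x ⬝ᵥ (G *ᵥ x)) :
    IsUnit G.det ∧ ‖G⁻¹‖ ≤ 1 / g := by
  have hPD : G.PosDef := by
    refine Matrix.PosDef.of_dotProduct_mulVec_pos hG fun x hx => ?_
    have hxx : 0 < x ⬝ᵥ x := by
      rw [← norm_toE_sq]
      have hne : toE x ≠ 0 := by simpa [toE] using hx
      exact pow_pos (norm_pos_iff.mpr hne) 2
    have := hq x
    have hst : star x = x := by simp
    rw [hst]
    nlinarith
  have hdet : IsUnit G.det := hPD.det_pos.ne'.isUnit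
  refine ⟨hdet, norm_le_of_bound _ (by positivity) fun x => ?_⟩
  set u : Fin n → ℝ := G⁻¹ *ᵥ x with hu
  have hGu : G *ᵥ u = x := by
    rw [hu, Matrix.mulVec_mulVec, Matrix.mul_nonsing_inv _ hdet, Matrix.one_mulVec]
  have h1 : g * ‖toE u‖ ^ 2 ≤ ‖toE u‖ * ‖toE x‖ := by
    calc g * ‖toE u‖ ^ 2 = g * (u ⬝ᵥ u) := by rw [norm_toE_sq]
      _ ≤ u ⬝ᵥ (G *ᵥ u) := hq u
      _ = @inner ℝ _ _ (toE u) (toE (G *ᵥ u)) := (inner_toE _ _).symm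
      _ ≤ ‖toE u‖ * ‖toE (G *ᵥ u)‖ := real_inner_le_norm _ _
      _ = ‖toE u‖ * ‖toE x‖ := by rw [hGu]
  have hun : 0 ≤ ‖toE u‖ := norm_nonneg _
  have hxn : 0 ≤ ‖toE x‖ := norm_nonneg _
  rcases eq_or_lt_of_le hun with h0 | h0
  · rw [← h0]; positivity
  · have : g * ‖toE u‖ ≤ ‖toE x‖ := by
      have := (mul_le_mul_iff_of_pos_right h0).mp (by nlinarith : g * ‖toE u‖ * ‖toE u‖ ≤ ‖toE x‖ * ‖toE u‖)
      linarith
    rw [div_mul_eq_mul_div, le_div_iff₀ hg]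
    linarith

end SpecAux
end Aux
open scoped Matrix.Norms.L2Operator

namespace SpecAux

lemma herm_sandwich {p k : ℕ} {M : Matrix (Fin p) (Fin p) ℝ} (hM : M.IsHermitian)
    (X : Matrix (Fin p) (Fin k) ℝ) : (Xᵀ * M * X).IsHermitian := by
  have := Matrix.isHermitian_conjTranspose_mul_mul X hM
  rwa [Matrix.conjTranspose_eq_transpose_of_trivial] at this

lemma dot_sandwich {p k : ℕ} (M : Matrix (Fin p) (Fin p) ℝ) (X : Matrix (Fin p) (Fin k) ℝ)
    (x : Fin k → ℝ) : x ⬝ᵥ ((Xᵀ * M * X) *ᵥ x) = (X *ᵥ x) ⬝ᵥ (M *ᵥ (X *ᵥ x)) := by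
  rw [← Matrix.mulVec_mulVec, ← Matrix.mulVec_mulVec, Matrix.dotProduct_mulVec x Xᵀ,
    Matrix.vecMul_transpose]

lemma lmin_pos_of_posDef {p : ℕ} [NeZero p] {A : Matrix (Fin p) (Fin p) ℝ} (hA : A.PosDef) :
    0 < lmin A := by
  obtain ⟨i, hi⟩ := exists_lmin hA.1
  rw [← hi]; exact hA.eigenvalues_pos i

lemma one_div_lmin_le {p : ℕ} [NeZero p] {A : Matrix (Fin p) (Fin p) ℝ} (hA : A.PosDef) :
    1 / lmin A ≤ ‖A⁻¹‖ := by
  obtain ⟨i, hi⟩ := exists_lmin hA.1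
  set lam := lmin A with hlam
  have hlp : 0 < lam := lmin_pos_of_posDef hA
  set v : Fin p → ℝ := ⇑(hA.1.eigenvectorBasis i) with hv
  have hAv : A *ᵥ v = lam • v := by rw [hv, hA.1.mulVec_eigenvectorBasis, hi]
  have hdet : IsUnit A.det := hA.det_pos.ne'.isUnit
  have hinv : A⁻¹ *ᵥ v = lam⁻¹ • v := by
    have h1 : A⁻¹ *ᵥ (A *ᵥ v) = v := by
      rw [Matrix.mulVec_mulVec, Matrix.nonsing_inv_mul _ hdet, Matrix.one_mulVec]
    rw [hAv, Matrix.mulVec_smul] at h1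
    exact ((inv_smul_eq_iff₀ hlp.ne').mpr h1.symm).symm
  have hnv : ‖toE v‖ = 1 := by
    rw [show toE v = hA.1.eigenvectorBasis i from rfl]
    exact hA.1.eigenvectorBasis.orthonormal.1 i
  have := norm_mulVec_le A⁻¹ v
  rw [hinv, hnv, mul_one] at this
  have h2 : ‖toE (lam⁻¹ • v)‖ = lam⁻¹ := by
    rw [show toE (lam⁻¹ • v) = lam⁻¹ • toE v from rfl, norm_smul, hnv, mul_one,
      Real.norm_eq_abs, abs_of_pos (by positivity)]
  rw [h2] at this
  rwa [one_div]

lemma norm_sq_le {p k : ℕ} [NeZero p] [NeZero k] {A : Matrix (Fin p) (Fin p) ℝ} (hA : A.PosDef)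
    (X : Matrix (Fin p) (Fin k) ℝ) : ‖X‖ * ‖X‖ ≤ lmax (Xᵀ * A * X) / lmin A := by
  have hlp : 0 < lmin A := lmin_pos_of_posDef hA
  have hherm : (Xᵀ * A * X).IsHermitian := herm_sandwich hA.1 X
  have hPSD : (Xᵀ * A * X).PosSemidef := by
    have := hA.posSemidef.conjTranspose_mul_mul_same X
    rwa [Matrix.conjTranspose_eq_transpose_of_trivial] at this
  have hlmax0 : 0 ≤ lmax (Xᵀ * A * X) := by
    have i : Fin k := ⟨0, Nat.pos_of_ne_zero (NeZero.ne k)⟩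
    exact le_trans (hPSD.eigenvalues_nonneg i) (le_lmax hherm i)
  set c : ℝ := Real.sqrt (lmax (Xᵀ * A * X) / lmin A) with hc
  have hc0 : 0 ≤ c := Real.sqrt_nonneg _
  have hcsq : c ^ 2 = lmax (Xᵀ * A * X) / lmin A := Real.sq_sqrt (by positivity)
  have hXle : ‖X‖ ≤ c := by
    refine norm_le_of_bound _ hc0 fun x => ?_
    have key : lmin A * ‖toE (X *ᵥ x)‖ ^ 2 ≤ lmax (Xᵀ * A * X) * ‖toE x‖ ^ 2 := by
      rw [norm_toE_sq, norm_toE_sq]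
      calc lmin A * ((X *ᵥ x) ⬝ᵥ (X *ᵥ x)) ≤ (X *ᵥ x) ⬝ᵥ (A *ᵥ (X *ᵥ x)) := quad_ge hA.1 _
        _ = x ⬝ᵥ ((Xᵀ * A * X) *ᵥ x) := (dot_sandwich A X x).symm
        _ ≤ lmax (Xᵀ * A * X) * (x ⬝ᵥ x) := quad_le hherm x
    have hsq : ‖toE (X *ᵥ x)‖ ^ 2 ≤ (c * ‖toE x‖) ^ 2 := by
      rw [mul_pow, hcsq]
      rw [div_mul_eq_mul_div, le_div_iff₀ hlp]
      nlinarith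
    have := Real.sqrt_le_sqrt hsq
    rwa [Real.sqrt_sq (norm_nonneg _), Real.sqrt_sq (by positivity)] at this
  calc ‖X‖ * ‖X‖ ≤ c * c := mul_le_mul hXle hXle (norm_nonneg _) hc0
    _ = lmax (Xᵀ * A * X) / lmin A := by rw [← sq, hcsq]

lemma sandwich_norm {p k : ℕ} [NeZero p] [NeZero k] {A : Matrix (Fin p) (Fin p) ℝ} (hA : A.PosDef)
    (X : Matrix (Fin p) (Fin k) ℝ) (D : Matrix (Fin p) (Fin p) ℝ) :
    ‖Xᵀ * D * X‖ ≤ lmax (Xᵀ * A * X) * (‖A⁻¹‖ * ‖D‖) := by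
  have hlp : 0 < lmin A := lmin_pos_of_posDef hA
  have hXt : ‖Xᵀ‖ = ‖X‖ := by
    rw [← Matrix.conjTranspose_eq_transpose_of_trivial, Matrix.l2_opNorm_conjTranspose]
  have h1 : ‖Xᵀ * D * X‖ ≤ ‖X‖ * ‖X‖ * ‖D‖ := by
    calc ‖Xᵀ * D * X‖ ≤ ‖Xᵀ * D‖ * ‖X‖ := Matrix.l2_opNorm_mul _ _
      _ ≤ ‖Xᵀ‖ * ‖D‖ * ‖X‖ := by
          have := Matrix.l2_opNorm_mul Xᵀ D
          exact mul_le_mul_of_nonneg_right this (norm_nonneg _)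
      _ = ‖X‖ * ‖X‖ * ‖D‖ := by rw [hXt]; ring
  have h2 : ‖X‖ * ‖X‖ ≤ lmax (Xᵀ * A * X) / lmin A := norm_sq_le hA X
  have h3 : 0 ≤ lmax (Xᵀ * A * X) := by
    by_contra hneg
    push_neg at hneg
    have := div_neg_of_neg_of_pos hneg hlp
    nlinarith [mul_self_nonneg ‖X‖]
  have h4 : 1 / lmin A ≤ ‖A⁻¹‖ := one_div_lmin_le hA
  calc ‖Xᵀ * D * X‖ ≤ ‖X‖ * ‖X‖ * ‖D‖ := h1
    _ ≤ (lmax (Xᵀ * A * X) / lmin A) * ‖D‖ :=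
        mul_le_mul_of_nonneg_right h2 (norm_nonneg _)
    _ = lmax (Xᵀ * A * X) * ((1 / lmin A) * ‖D‖) := by ring
    _ ≤ lmax (Xᵀ * A * X) * (‖A⁻¹‖ * ‖D‖) := by
        apply mul_le_mul_of_nonneg_left _ h3
        exact mul_le_mul_of_nonneg_right h4 (norm_nonneg _)

end SpecAux

section Main
open scoped Matrix.Norms.L2Operator
open SpecAux

/-- If `A` is symmetric positive definite with `λ_min(ZᵀAZ) > λ_min(WᵀAW)`, `B` is
symmetric, and `Δ̂(B,A) < 1`, then `γ(B)` is invertible (so `β̂(B)` is well defined),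
`‖γ(B)⁻¹‖ ≤ (1/(1−Δ̂))·1/(λ_min(ZᵀAZ) − λ_min(WᵀAW))`, and
`‖γ(B)⁻¹ − γ(A)⁻¹‖ ≤ (Δ̂/(1−Δ̂))·1/(λ_min(ZᵀAZ) − λ_min(WᵀAW))`. -/
theorem stmt5 {p m : ℕ} (hp : 0 < p) (hm : 0 < m)
    (Z : Matrix (Fin p) (Fin m) ℝ) (y : Fin p → ℝ)
    (A B : Matrix (Fin p) (Fin p) ℝ) (hA : A.PosDef) (hBsymm : B.IsSymm)
    (hgap : lmin ((appendCol Z y)ᵀ * A * appendCol Z y) < lmin (Zᵀ * A * Z))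
    (hD : Deltahat Z y A B < 1) :
    IsUnit (gam Z y B).det ∧
      spec (gam Z y B)⁻¹ ≤
        1 / (1 - Deltahat Z y A B) *
          (1 / (lmin (Zᵀ * A * Z) - lmin ((appendCol Z y)ᵀ * A * appendCol Z y))) ∧
      spec ((gam Z y B)⁻¹ - (gam Z y A)⁻¹) ≤
        Deltahat Z y A B / (1 - Deltahat Z y A B) *
          (1 / (lmin (Zᵀ * A * Z) - lmin ((appendCol Z y)ᵀ * A * appendCol Z y))) := by
  have hpm : NeZero p := ⟨hp.ne'⟩
  have hmm : NeZero m := ⟨hm.ne'⟩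
  set W : Matrix (Fin p) (Fin (m + 1)) ℝ := appendCol Z y with hW
  set g : ℝ := lmin (Zᵀ * A * Z) - lmin (Wᵀ * A * W) with hgdef
  set Δ : ℝ := Deltahat Z y A B with hΔdef
  have hg : 0 < g := sub_pos.mpr hgap
  have hAh : A.IsHermitian := hA.1
  have hBh : B.IsHermitian := (B.conjTranspose_eq_transpose_of_trivial).trans hBsymm
  have hDh : (B - A).IsHermitian := hBh.sub hAh
  -- quadratic lower bound for gam Z y A
  have hGAherm : (gam Z y A).IsHermitian := by
    unfold gam
    refine (herm_sandwich hAh Z).sub ?_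
    simp [Matrix.IsHermitian, Matrix.conjTranspose_smul]
  have hGAquad : ∀ x : Fin m → ℝ, g * (x ⬝ᵥ x) ≤ x ⬝ᵥ (gam Z y A *ᵥ x) := by
    intro x
    have h1 : gam Z y A *ᵥ x = (Zᵀ * A * Z) *ᵥ x - lmin (Wᵀ * A * W) • x := by
      unfold gam
      rw [Matrix.sub_mulVec, Matrix.smul_mulVec, Matrix.one_mulVec, hW]
    rw [h1, dotProduct_sub]
    have h2 := quad_ge (herm_sandwich hAh Z) x
    have h3 : x ⬝ᵥ (lmin (Wᵀ * A * W) • x) = lmin (Wᵀ * A * W) * (x ⬝ᵥ x) := by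
      rw [dotProduct_smul, smul_eq_mul]
    rw [h3, hgdef]
    nlinarith [h2]
  obtain ⟨hGAdet, hGAn⟩ := inv_bound hGAherm hg hGAquad
  -- the perturbation E
  set E : Matrix (Fin m) (Fin m) ℝ := gam Z y B - gam Z y A with hEdef
  have hE : E = Zᵀ * (B - A) * Z - (lmin (Wᵀ * B * W) - lmin (Wᵀ * A * W)) •
      (1 : Matrix (Fin m) (Fin m) ℝ) := by
    rw [hEdef]
    unfold gam
    rw [← hW]
    rw [Matrix.mul_sub, Matrix.sub_mul, sub_smul]
    abel
  -- bound on ‖E‖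
  have hZb : ‖Zᵀ * (B - A) * Z‖ ≤ lmax (Zᵀ * A * Z) * (‖A⁻¹‖ * ‖B - A‖) :=
    sandwich_norm hA Z (B - A)
  have hWb : ‖Wᵀ * (B - A) * W‖ ≤ lmax (Wᵀ * A * W) * (‖A⁻¹‖ * ‖B - A‖) :=
    sandwich_norm hA W (B - A)
  have hweyl : |lmin (Wᵀ * B * W) - lmin (Wᵀ * A * W)| ≤ ‖Wᵀ * (B - A) * W‖ := by
    have h := abs_lmin_sub_le (herm_sandwich hBh W) (herm_sandwich hAh W)
    have heq : Wᵀ * B * W - Wᵀ * A * W = Wᵀ * (B - A) * W := by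
      rw [Matrix.mul_sub, Matrix.sub_mul]
    rwa [heq] at h
  have hEb : ‖E‖ ≤ (lmax (Zᵀ * A * Z) + lmax (Wᵀ * A * W)) * (‖A⁻¹‖ * ‖B - A‖) := by
    rw [hE]
    calc ‖Zᵀ * (B - A) * Z - (lmin (Wᵀ * B * W) - lmin (Wᵀ * A * W)) • (1 : Matrix (Fin m) (Fin m) ℝ)‖
        ≤ ‖Zᵀ * (B - A) * Z‖ + ‖(lmin (Wᵀ * B * W) - lmin (Wᵀ * A * W)) • (1 : Matrix (Fin m) (Fin m) ℝ)‖ :=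
          norm_sub_le _ _
      _ ≤ ‖Zᵀ * (B - A) * Z‖ + |lmin (Wᵀ * B * W) - lmin (Wᵀ * A * W)| := by
          have : ‖(lmin (Wᵀ * B * W) - lmin (Wᵀ * A * W)) • (1 : Matrix (Fin m) (Fin m) ℝ)‖ =
              |lmin (Wᵀ * B * W) - lmin (Wᵀ * A * W)| * ‖(1 : Matrix (Fin m) (Fin m) ℝ)‖ := by
            rw [norm_smul, Real.norm_eq_abs]
          rw [this]
          have h1 := norm_one_le (n := m)
          nlinarith [abs_nonneg (lmin (Wᵀ * B * W) - lmin (Wᵀ * A * W))]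
      _ ≤ lmax (Zᵀ * A * Z) * (‖A⁻¹‖ * ‖B - A‖) + lmax (Wᵀ * A * W) * (‖A⁻¹‖ * ‖B - A‖) :=
          add_le_add hZb (le_trans hweyl hWb)
      _ = (lmax (Zᵀ * A * Z) + lmax (Wᵀ * A * W)) * (‖A⁻¹‖ * ‖B - A‖) := by ring
  have hΔg : Δ * g = (lmax (Zᵀ * A * Z) + lmax (Wᵀ * A * W)) * (‖A⁻¹‖ * ‖B - A‖) := by
    rw [hΔdef, Deltahat, spec_eq_norm, spec_eq_norm, ← hW, ← hgdef]
    field_simp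
  have hEb2 : ‖E‖ ≤ Δ * g := by rw [hΔg]; exact hEb
  have hΔ0 : 0 ≤ Δ := by nlinarith [norm_nonneg E]
  have h1Δ : 0 < 1 - Δ := by linarith
  -- Neumann argument
  set K : Matrix (Fin m) (Fin m) ℝ := (gam Z y A)⁻¹ * E with hKdef
  have hKn : ‖K‖ ≤ Δ := by
    calc ‖K‖ ≤ ‖(gam Z y A)⁻¹‖ * ‖E‖ := Matrix.l2_opNorm_mul _ _
      _ ≤ (1 / g) * (Δ * g) := by
          apply mul_le_mul hGAn hEb2 (norm_nonneg _) (by positivity)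
      _ = Δ := by field_simp
  have hK1 : ‖K‖ < 1 := lt_of_le_of_lt hKn hD
  have hunit : IsUnit (1 + K) := by
    have h := (Units.oneSub (-K) (by rwa [norm_neg])).isUnit
    rwa [Units.val_oneSub, sub_neg_eq_add] at h
  have hudet : IsUnit (1 + K).det := (Matrix.isUnit_iff_isUnit_det _).mp hunit
  have hfact : gam Z y B = gam Z y A * (1 + K) := by
    rw [Matrix.mul_add, Matrix.mul_one, hKdef, ← Matrix.mul_assoc,
      Matrix.mul_nonsing_inv _ hGAdet, Matrix.one_mul, hEdef]
    abel
  have hGBdet : IsUnit (gam Z y B).det := by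
    rw [hfact, Matrix.det_mul]
    exact hGAdet.mul hudet
  have hGBinv : (gam Z y B)⁻¹ = (1 + K)⁻¹ * (gam Z y A)⁻¹ := by
    rw [hfact, Matrix.mul_inv_rev]
  have hJ : ‖(1 + K)⁻¹‖ ≤ 1 / (1 - Δ) := by
    have hJ1 : (1 + K)⁻¹ * (1 + K) = 1 := Matrix.nonsing_inv_mul _ hudet
    have hJeq : (1 + K)⁻¹ = 1 - (1 + K)⁻¹ * K := by
      have h := hJ1
      rw [Matrix.mul_add, Matrix.mul_one] at h
      rw [eq_sub_iff_add_eq, h]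
    have hJb : ‖(1 + K)⁻¹‖ ≤ 1 + ‖(1 + K)⁻¹‖ * Δ := by
      calc ‖(1 + K)⁻¹‖ = ‖(1 : Matrix (Fin m) (Fin m) ℝ) - (1 + K)⁻¹ * K‖ := by rw [← hJeq]
        _ ≤ ‖(1 : Matrix (Fin m) (Fin m) ℝ)‖ + ‖(1 + K)⁻¹ * K‖ := norm_sub_le _ _
        _ ≤ 1 + ‖(1 + K)⁻¹‖ * ‖K‖ := add_le_add norm_one_le (Matrix.l2_opNorm_mul _ _)
        _ ≤ 1 + ‖(1 + K)⁻¹‖ * Δ := by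
            have := mul_le_mul_of_nonneg_left hKn (norm_nonneg ((1 + K)⁻¹ :
              Matrix (Fin m) (Fin m) ℝ))
            linarith
    rw [le_div_iff₀ h1Δ]
    nlinarith
  have hg1 : (0:ℝ) < 1 / g := div_pos one_pos hg
  have hd1 : (0:ℝ) < 1 / (1 - Δ) := div_pos one_pos h1Δ
  have hGBn : ‖(gam Z y B)⁻¹‖ ≤ (1 / (1 - Δ)) * (1 / g) := by
    have h2 : ‖(1 + K)⁻¹ * (gam Z y A)⁻¹‖ ≤ ‖(1 + K)⁻¹‖ * ‖(gam Z y A)⁻¹‖ :=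
      Matrix.l2_opNorm_mul _ _
    have h3 : ‖(1 + K)⁻¹‖ * ‖(gam Z y A)⁻¹‖ ≤ (1 / (1 - Δ)) * (1 / g) :=
      mul_le_mul hJ hGAn (norm_nonneg _) hd1.le
    rw [hGBinv]
    exact le_trans h2 h3
  refine ⟨hGBdet, ?_, ?_⟩
  · rw [spec_eq_norm]
    exact hGBn
  · have hdiff : (gam Z y B)⁻¹ - (gam Z y A)⁻¹ = (gam Z y B)⁻¹ * (gam Z y A - gam Z y B) *
        (gam Z y A)⁻¹ := by
      rw [Matrix.mul_sub, Matrix.sub_mul, Matrix.mul_assoc ((gam Z y B)⁻¹) (gam Z y A)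
        ((gam Z y A)⁻¹), Matrix.mul_nonsing_inv _ hGAdet, Matrix.mul_one,
        Matrix.nonsing_inv_mul _ hGBdet, Matrix.one_mul]
    have hnegE : ‖gam Z y A - gam Z y B‖ ≤ Δ * g := by
      rw [norm_sub_rev, ← hEdef]
      exact hEb2
    have hs1 : ‖(gam Z y B)⁻¹ * (gam Z y A - gam Z y B) * (gam Z y A)⁻¹‖ ≤
        ‖(gam Z y B)⁻¹ * (gam Z y A - gam Z y B)‖ * ‖(gam Z y A)⁻¹‖ := Matrix.l2_opNorm_mul _ _
    have hs2 : ‖(gam Z y B)⁻¹ * (gam Z y A - gam Z y B)‖ ≤ ‖(gam Z y B)⁻¹‖ *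
        ‖gam Z y A - gam Z y B‖ := Matrix.l2_opNorm_mul _ _
    have hs3 : ‖(gam Z y B)⁻¹‖ * ‖gam Z y A - gam Z y B‖ ≤
        ((1 / (1 - Δ)) * (1 / g)) * (Δ * g) :=
      mul_le_mul hGBn hnegE (norm_nonneg _) (mul_pos hd1 hg1).le
    have hs4 : ‖(gam Z y B)⁻¹ * (gam Z y A - gam Z y B)‖ * ‖(gam Z y A)⁻¹‖ ≤
        (((1 / (1 - Δ)) * (1 / g)) * (Δ * g)) * (1 / g) :=
      mul_le_mul (le_trans hs2 hs3) hGAn (norm_nonneg _)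
        (mul_nonneg (mul_pos hd1 hg1).le (mul_nonneg hΔ0 hg.le))
    have heq : (((1 / (1 - Δ)) * (1 / g)) * (Δ * g)) * (1 / g) = Δ / (1 - Δ) * (1 / g) := by
      field_simp
    rw [spec_eq_norm, hdiff]
    calc ‖(gam Z y B)⁻¹ * (gam Z y A - gam Z y B) * (gam Z y A)⁻¹‖
        ≤ ‖(gam Z y B)⁻¹ * (gam Z y A - gam Z y B)‖ * ‖(gam Z y A)⁻¹‖ := hs1
      _ ≤ (((1 / (1 - Δ)) * (1 / g)) * (Δ * g)) * (1 / g) := hs4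
      _ = Δ / (1 - Δ) * (1 / g) := heq

end Main
end

section
/- Let A be a real symmetric positive definite p×p matrix with λ_min(ZᵀAZ) > λ_min(WᵀAW) (so that β̂(A) is well defined), let B be a real symmetric p×p matrix, and suppose Δ̂ := Δ̂(B,A) < 1. Then β̂(B) is well defined and ‖β̂(B)‖ ≤ ((1+Δ̂)/(1−Δ̂)) · UB(A). -/
open Matrix

open scoped RealInnerProductSpace

section
open scoped MatrixOrder

noncomputable def Matrix.PosSemidef.sqrt {n : ℕ} {A : Matrix (Fin n) (Fin n) ℝ}
    (_ : A.PosSemidef) : Matrix (Fin n) (Fin n) ℝ := CFC.sqrt A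

lemma Matrix.PosSemidef.sqrt_mul_self {n : ℕ} {A : Matrix (Fin n) (Fin n) ℝ}
    (hA : A.PosSemidef) : hA.sqrt * hA.sqrt = A :=
  CFC.sqrt_mul_sqrt_self A hA.nonneg

lemma Matrix.PosSemidef.posSemidef_sqrt {n : ℕ} {A : Matrix (Fin n) (Fin n) ℝ}
    (hA : A.PosSemidef) : hA.sqrt.PosSemidef :=
  (CFC.sqrt_nonneg A).posSemidef
end

namespace Aux
variable {a b n : ℕ}

noncomputable def ev (v : Fin n → ℝ) : EuclideanSpace ℝ (Fin n) := (WithLp.equiv 2 _).symm v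

lemma dot_self_nonneg (v : Fin n → ℝ) : 0 ≤ v ⬝ᵥ v :=
  Finset.sum_nonneg fun _ _ => mul_self_nonneg _

lemma norm_ev (v : Fin n → ℝ) : ‖ev v‖ = Real.sqrt (v ⬝ᵥ v) := by
  rw [EuclideanSpace.norm_eq]; congr 1; simp [ev, dotProduct, sq]

lemma inner_ev (u v : Fin n → ℝ) : ⟪ev u, ev v⟫ = u ⬝ᵥ v := by
  simp [ev, PiLp.inner_apply, dotProduct, RCLike.inner_apply, mul_comm]

lemma dot_cs (u v : Fin n → ℝ) : u ⬝ᵥ v ≤ Real.sqrt (u ⬝ᵥ u) * Real.sqrt (v ⬝ᵥ v) := by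
  rw [← inner_ev, ← norm_ev, ← norm_ev]; exact real_inner_le_norm _ _

lemma abs_dot_le (u v : Fin n → ℝ) : |u ⬝ᵥ v| ≤ Real.sqrt (u ⬝ᵥ u) * Real.sqrt (v ⬝ᵥ v) := by
  rw [← inner_ev, ← norm_ev, ← norm_ev]; exact abs_real_inner_le_norm _ _

lemma ev_mulVec (M : Matrix (Fin a) (Fin b) ℝ) (v : Fin b → ℝ) :
    Matrix.toEuclideanLin M (ev v) = ev (M *ᵥ v) :=
  Matrix.toEuclideanLin_apply_piLp_toLp M v

lemma spec_nonneg (M : Matrix (Fin a) (Fin b) ℝ) : 0 ≤ spec M := norm_nonneg _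

lemma mulVec_spec_le (M : Matrix (Fin a) (Fin b) ℝ) (v : Fin b → ℝ) :
    Real.sqrt ((M *ᵥ v) ⬝ᵥ (M *ᵥ v)) ≤ spec M * Real.sqrt (v ⬝ᵥ v) := by
  rw [← norm_ev, ← norm_ev, ← ev_mulVec]
  exact (LinearMap.toContinuousLinearMap (Matrix.toEuclideanLin M)).le_opNorm (ev v)

lemma abs_dot_mulVec_le (E : Matrix (Fin n) (Fin n) ℝ) (u : Fin n → ℝ) :
    |u ⬝ᵥ (E *ᵥ u)| ≤ spec E * (u ⬝ᵥ u) := by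
  calc |u ⬝ᵥ (E *ᵥ u)| ≤ Real.sqrt (u ⬝ᵥ u) * Real.sqrt ((E *ᵥ u) ⬝ᵥ (E *ᵥ u)) := abs_dot_le _ _
    _ ≤ Real.sqrt (u ⬝ᵥ u) * (spec E * Real.sqrt (u ⬝ᵥ u)) :=
        mul_le_mul_of_nonneg_left (mulVec_spec_le E u) (Real.sqrt_nonneg _)
    _ = spec E * (Real.sqrt (u ⬝ᵥ u) * Real.sqrt (u ⬝ᵥ u)) := by ring
    _ = spec E * (u ⬝ᵥ u) := by rw [Real.mul_self_sqrt (dot_self_nonneg u)]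

lemma spec_le_of (M : Matrix (Fin a) (Fin b) ℝ) (C : ℝ) (hC : 0 ≤ C)
    (h : ∀ x : Fin b → ℝ, (M *ᵥ x) ⬝ᵥ (M *ᵥ x) ≤ C ^ 2 * (x ⬝ᵥ x)) : spec M ≤ C := by
  apply ContinuousLinearMap.opNorm_le_bound _ hC
  intro v
  have hv : v = ev ((WithLp.equiv 2 _) v) := rfl
  rw [LinearMap.coe_toContinuousLinearMap']
  set x := (WithLp.equiv 2 (Fin b → ℝ)) v with hx
  rw [hv, ev_mulVec, norm_ev, norm_ev]
  calc Real.sqrt ((M *ᵥ x) ⬝ᵥ (M *ᵥ x)) ≤ Real.sqrt (C ^ 2 * (x ⬝ᵥ x)) :=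
        Real.sqrt_le_sqrt (h x)
    _ = C * Real.sqrt (x ⬝ᵥ x) := by
        rw [Real.sqrt_mul (sq_nonneg C), Real.sqrt_sq hC]

lemma mulVec_transpose_le (M : Matrix (Fin a) (Fin b) ℝ) (w : Fin a → ℝ) :
    Real.sqrt ((Mᵀ *ᵥ w) ⬝ᵥ (Mᵀ *ᵥ w)) ≤ spec M * Real.sqrt (w ⬝ᵥ w) := by
  set u := Mᵀ *ᵥ w with hu
  have key : u ⬝ᵥ u = w ⬝ᵥ (M *ᵥ u) := by
    conv_rhs => rw [dotProduct_mulVec, ← mulVec_transpose, ← hu]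
  have h1 : u ⬝ᵥ u ≤ Real.sqrt (w ⬝ᵥ w) * (spec M * Real.sqrt (u ⬝ᵥ u)) := by
    calc u ⬝ᵥ u = w ⬝ᵥ (M *ᵥ u) := key
      _ ≤ Real.sqrt (w ⬝ᵥ w) * Real.sqrt ((M *ᵥ u) ⬝ᵥ (M *ᵥ u)) := dot_cs _ _
      _ ≤ Real.sqrt (w ⬝ᵥ w) * (spec M * Real.sqrt (u ⬝ᵥ u)) :=
          mul_le_mul_of_nonneg_left (mulVec_spec_le M u) (Real.sqrt_nonneg _)
  rcases eq_or_lt_of_le (Real.sqrt_nonneg (u ⬝ᵥ u)) with h0 | h0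
  · rw [← h0]; exact mul_nonneg (spec_nonneg M) (Real.sqrt_nonneg _)
  · have h2 : Real.sqrt (u ⬝ᵥ u) * Real.sqrt (u ⬝ᵥ u) ≤
        (spec M * Real.sqrt (w ⬝ᵥ w)) * Real.sqrt (u ⬝ᵥ u) := by
      rw [Real.mul_self_sqrt (dot_self_nonneg u)]
      calc u ⬝ᵥ u ≤ Real.sqrt (w ⬝ᵥ w) * (spec M * Real.sqrt (u ⬝ᵥ u)) := h1
        _ = (spec M * Real.sqrt (w ⬝ᵥ w)) * Real.sqrt (u ⬝ᵥ u) := by ring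
    exact le_of_mul_le_mul_right h2 h0

lemma dot_triangle (u v : Fin n → ℝ) :
    Real.sqrt ((u + v) ⬝ᵥ (u + v)) ≤ Real.sqrt (u ⬝ᵥ u) + Real.sqrt (v ⬝ᵥ v) := by
  rw [← norm_ev, ← norm_ev, ← norm_ev]
  have h : ev (u + v) = ev u + ev v := rfl
  rw [h]; exact norm_add_le _ _

lemma dot_self_pos {x : Fin n → ℝ} (hx : x ≠ 0) : 0 < x ⬝ᵥ x := by
  rcases (dot_self_nonneg x).lt_or_eq with h | h
  · exact h
  · exfalso; apply hx
    have h0 : ∑ i, x i * x i = 0 := h.symm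
    funext i
    have h2 := (Finset.sum_eq_zero_iff_of_nonneg
      (fun i _ => mul_self_nonneg (x i))).mp h0 i (Finset.mem_univ i)
    exact mul_self_eq_zero.mp h2

lemma sandwich (M : Matrix (Fin a) (Fin b) ℝ) (C : Matrix (Fin a) (Fin a) ℝ) (x : Fin b → ℝ) :
    x ⬝ᵥ ((Mᵀ * C * M) *ᵥ x) = (M *ᵥ x) ⬝ᵥ (C *ᵥ (M *ᵥ x)) := by
  rw [Matrix.mul_assoc, ← mulVec_mulVec, dotProduct_mulVec, vecMul_transpose, mulVec_mulVec]

section PD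
variable {A : Matrix (Fin n) (Fin n) ℝ}

lemma dotA_nonneg (hA : A.PosDef) (u : Fin n → ℝ) : 0 ≤ u ⬝ᵥ (A *ᵥ u) := by
  simpa using (posSemidef_iff_dotProduct_mulVec.mp hA.posSemidef).2 u

lemma detS_isUnit (hA : A.PosDef) : IsUnit hA.posSemidef.sqrt.det := by
  have h : hA.posSemidef.sqrt.det * hA.posSemidef.sqrt.det = A.det := by
    rw [← det_mul, hA.posSemidef.sqrt_mul_self]
  apply isUnit_iff_ne_zero.mpr
  intro h0
  rw [h0, mul_zero] at h
  exact hA.det_pos.ne' h.symm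

lemma sqrtT (hA : A.PosDef) : (hA.posSemidef.sqrt)ᵀ = hA.posSemidef.sqrt := by
  have h := hA.posSemidef.posSemidef_sqrt.isHermitian
  rwa [Matrix.IsHermitian, conjTranspose_eq_transpose_of_trivial] at h

lemma sqrt_dot (hA : A.PosDef) (u : Fin n → ℝ) :
    (hA.posSemidef.sqrt *ᵥ u) ⬝ᵥ (hA.posSemidef.sqrt *ᵥ u) = u ⬝ᵥ (A *ᵥ u) := by
  rw [dotProduct_mulVec, ← mulVec_transpose, sqrtT hA, mulVec_mulVec,
    hA.posSemidef.sqrt_mul_self, dotProduct_comm]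

lemma dot_le_spec_inv (hA : A.PosDef) (u : Fin n → ℝ) :
    u ⬝ᵥ u ≤ spec A⁻¹ * (u ⬝ᵥ (A *ᵥ u)) := by
  set S := hA.posSemidef.sqrt with hS
  set w := S *ᵥ u with hw
  have hAinv : A⁻¹ = S⁻¹ * S⁻¹ := by rw [← hA.posSemidef.sqrt_mul_self, Matrix.mul_inv_rev]
  have key1 : A⁻¹ *ᵥ w = S⁻¹ *ᵥ u := by
    rw [hw, mulVec_mulVec, hAinv, Matrix.mul_assoc, Matrix.nonsing_inv_mul S (detS_isUnit hA),
      Matrix.mul_one]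
  have key2 : (S⁻¹ *ᵥ u) ⬝ᵥ w = u ⬝ᵥ u := by
    rw [hw, dotProduct_mulVec, ← mulVec_transpose, sqrtT hA, mulVec_mulVec,
      Matrix.mul_nonsing_inv S (detS_isUnit hA), one_mulVec]
  have hww : w ⬝ᵥ w = u ⬝ᵥ (A *ᵥ u) := sqrt_dot hA u
  calc u ⬝ᵥ u = (A⁻¹ *ᵥ w) ⬝ᵥ w := by rw [key1, key2]
    _ ≤ Real.sqrt ((A⁻¹ *ᵥ w) ⬝ᵥ (A⁻¹ *ᵥ w)) * Real.sqrt (w ⬝ᵥ w) := dot_cs _ _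
    _ ≤ (spec A⁻¹ * Real.sqrt (w ⬝ᵥ w)) * Real.sqrt (w ⬝ᵥ w) :=
        mul_le_mul_of_nonneg_right (mulVec_spec_le _ _) (Real.sqrt_nonneg _)
    _ = spec A⁻¹ * (Real.sqrt (w ⬝ᵥ w) * Real.sqrt (w ⬝ᵥ w)) := by ring
    _ = spec A⁻¹ * (u ⬝ᵥ (A *ᵥ u)) := by rw [Real.mul_self_sqrt (dot_self_nonneg w), hww]
end PD

lemma isherm_of_symm {C : Matrix (Fin n) (Fin n) ℝ} (h : C.IsSymm) : C.IsHermitian := by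
  rw [Matrix.IsHermitian, conjTranspose_eq_transpose_of_trivial]; exact h

lemma herm_sandwich {C : Matrix (Fin a) (Fin a) ℝ} (hC : C.IsHermitian)
    (M : Matrix (Fin a) (Fin b) ℝ) : (Mᵀ * C * M).IsHermitian := by
  have h := isHermitian_conjTranspose_mul_mul M hC
  rwa [conjTranspose_eq_transpose_of_trivial] at h

lemma smul_one_herm (c : ℝ) : (c • (1 : Matrix (Fin n) (Fin n) ℝ)).IsHermitian := by
  simp [Matrix.IsHermitian]

section Eig
variable {M : Matrix (Fin n) (Fin n) ℝ}

lemma repr_inner (bb : OrthonormalBasis (Fin n) ℝ (EuclideanSpace ℝ (Fin n)))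
    (u v : EuclideanSpace ℝ (Fin n)) : ⟪u, v⟫ = ∑ i, bb.repr u i * bb.repr v i := by
  rw [← bb.repr.inner_map_map u v, PiLp.inner_apply]
  simp only [RCLike.inner_apply, conj_trivial]
  exact Finset.sum_congr rfl fun _ _ => mul_comm _ _

lemma toEuc_eigen (hM : M.IsHermitian) (j : Fin n) :
    Matrix.toEuclideanLin M (hM.eigenvectorBasis j) =
      hM.eigenvalues j • hM.eigenvectorBasis j := by
  have h := hM.mulVec_eigenvectorBasis j
  show ev (M *ᵥ ⇑(hM.eigenvectorBasis j)) = _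
  rw [h]; rfl

lemma dot_self_eq_sum (hM : M.IsHermitian) (x : Fin n → ℝ) :
    x ⬝ᵥ x = ∑ i, (hM.eigenvectorBasis.repr (ev x) i) ^ 2 := by
  rw [← inner_ev, repr_inner hM.eigenvectorBasis]
  simp [sq]

lemma dot_mulVec_eq_sum (hM : M.IsHermitian) (x : Fin n → ℝ) :
    x ⬝ᵥ (M *ᵥ x) = ∑ i, hM.eigenvalues i * (hM.eigenvectorBasis.repr (ev x) i) ^ 2 := by
  have hrepr : ∀ j, ⟪ev x, hM.eigenvectorBasis j⟫ = hM.eigenvectorBasis.repr (ev x) j := by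
    intro j; rw [hM.eigenvectorBasis.repr_apply_apply, real_inner_comm]
  calc x ⬝ᵥ (M *ᵥ x) = ⟪ev x, Matrix.toEuclideanLin M (ev x)⟫ := by
        rw [ev_mulVec, inner_ev]
    _ = ⟪ev x, Matrix.toEuclideanLin M
          (∑ j, hM.eigenvectorBasis.repr (ev x) j • hM.eigenvectorBasis j)⟫ := by
        rw [hM.eigenvectorBasis.sum_repr]
    _ = ∑ j, hM.eigenvalues j * (hM.eigenvectorBasis.repr (ev x) j) ^ 2 := by
        rw [map_sum, inner_sum]
        refine Finset.sum_congr rfl fun j _ => ?_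
        rw [_root_.map_smul, toEuc_eigen hM j, real_inner_smul_right,
          real_inner_smul_right, hrepr j]
        ring

lemma eig_le_lmax (hM : M.IsHermitian) (i : Fin n) : hM.eigenvalues i ≤ lmax M := by
  apply le_csSup
  · rw [hM.spectrum_real_eq_range_eigenvalues]; exact (Set.finite_range _).bddAbove
  · rw [hM.spectrum_real_eq_range_eigenvalues]; exact ⟨i, rfl⟩

lemma lmin_le_eig (hM : M.IsHermitian) (i : Fin n) : lmin M ≤ hM.eigenvalues i := by
  apply csInf_le
  · rw [hM.spectrum_real_eq_range_eigenvalues]; exact (Set.finite_range _).bddBelow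
  · rw [hM.spectrum_real_eq_range_eigenvalues]; exact ⟨i, rfl⟩

lemma rayleigh_le (hM : M.IsHermitian) (x : Fin n → ℝ) :
    x ⬝ᵥ (M *ᵥ x) ≤ lmax M * (x ⬝ᵥ x) := by
  rw [dot_mulVec_eq_sum hM, dot_self_eq_sum hM, Finset.mul_sum]
  exact Finset.sum_le_sum fun i _ =>
    mul_le_mul_of_nonneg_right (eig_le_lmax hM i) (sq_nonneg _)

lemma rayleigh_ge (hM : M.IsHermitian) (x : Fin n → ℝ) :
    lmin M * (x ⬝ᵥ x) ≤ x ⬝ᵥ (M *ᵥ x) := by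
  rw [dot_mulVec_eq_sum hM, dot_self_eq_sum hM, Finset.mul_sum]
  exact Finset.sum_le_sum fun i _ =>
    mul_le_mul_of_nonneg_right (lmin_le_eig hM i) (sq_nonneg _)

lemma lmin_attained (hM : M.IsHermitian) (hn : 0 < n) :
    ∃ x : Fin n → ℝ, x ⬝ᵥ x = 1 ∧ x ⬝ᵥ (M *ᵥ x) = lmin M := by
  haveI : Nonempty (Fin n) := Fin.pos_iff_nonempty.mp hn
  obtain ⟨i₀, hi₀⟩ := Finite.exists_min hM.eigenvalues
  have hmin : lmin M = hM.eigenvalues i₀ := by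
    refine le_antisymm (lmin_le_eig hM i₀) ?_
    apply le_csInf
    · rw [hM.spectrum_real_eq_range_eigenvalues]; exact ⟨_, i₀, rfl⟩
    · rw [hM.spectrum_real_eq_range_eigenvalues]; rintro _ ⟨i, rfl⟩; exact hi₀ i
  have hunit : (⇑(hM.eigenvectorBasis i₀) : Fin n → ℝ) ⬝ᵥ ⇑(hM.eigenvectorBasis i₀) = 1 := by
    rw [← inner_ev]
    have h : ev ⇑(hM.eigenvectorBasis i₀) = hM.eigenvectorBasis i₀ := rfl
    rw [h, real_inner_self_eq_norm_sq, hM.eigenvectorBasis.orthonormal.1 i₀]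
    norm_num
  refine ⟨⇑(hM.eigenvectorBasis i₀), hunit, ?_⟩
  rw [hM.mulVec_eigenvectorBasis i₀, dotProduct_smul, smul_eq_mul, hunit, hmin]
  ring

lemma vnorm_eq (v : Fin n → ℝ) : vnorm v = Real.sqrt (v ⬝ᵥ v) := by
  rw [vnorm]; congr 1; simp [dotProduct, sq]
end Eig
end Aux

set_option maxHeartbeats 1600000 in
/-- If `A` is symmetric positive definite with `λ_min(ZᵀAZ) > λ_min(WᵀAW)` (so
`β̂(A)` is well defined), `B` is symmetric, and `Δ̂ = Δ̂(B,A) < 1`, then `β̂(B)` is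
well defined and `‖β̂(B)‖ ≤ ((1+Δ̂)/(1−Δ̂))·UB(A)`. -/
theorem stmt7 {p m : ℕ} (hp : 0 < p) (hm : 0 < m)
    (Z : Matrix (Fin p) (Fin m) ℝ) (y : Fin p → ℝ)
    (A B : Matrix (Fin p) (Fin p) ℝ) (hA : A.PosDef) (hBsymm : B.IsSymm)
    (hgap : lmin ((appendCol Z y)ᵀ * A * appendCol Z y) < lmin (Zᵀ * A * Z))
    (hD : Deltahat Z y A B < 1) :
    IsUnit (gam Z y B).det ∧
      vnorm (betahat Z y B) ≤
        (1 + Deltahat Z y A B) / (1 - Deltahat Z y A B) * UB Z y A := by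
  classical
  -- abbreviations
  have hAh : A.IsHermitian := hA.isHermitian
  have hBh : B.IsHermitian := Aux.isherm_of_symm hBsymm
  have hZAh : (Zᵀ * A * Z).IsHermitian := Aux.herm_sandwich hAh Z
  have hWAh : ((appendCol Z y)ᵀ * A * appendCol Z y).IsHermitian := Aux.herm_sandwich hAh _
  have hZBh : (Zᵀ * B * Z).IsHermitian := Aux.herm_sandwich hBh Z
  have hWBh : ((appendCol Z y)ᵀ * B * appendCol Z y).IsHermitian := Aux.herm_sandwich hBh _
  have hε0 : 0 ≤ spec A⁻¹ * spec (B - A) :=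
    mul_nonneg (Aux.spec_nonneg _) (Aux.spec_nonneg _)
  -- the key perturbation inequality for quadratic forms
  have hstar : ∀ {k : ℕ} (M : Matrix (Fin p) (Fin k) ℝ) (x : Fin k → ℝ),
      |x ⬝ᵥ ((Mᵀ * B * M) *ᵥ x) - x ⬝ᵥ ((Mᵀ * A * M) *ᵥ x)| ≤
        spec A⁻¹ * spec (B - A) * (x ⬝ᵥ ((Mᵀ * A * M) *ᵥ x)) := by
    intro k M x
    rw [Aux.sandwich, Aux.sandwich]
    have h1 : (M *ᵥ x) ⬝ᵥ (B *ᵥ (M *ᵥ x)) - (M *ᵥ x) ⬝ᵥ (A *ᵥ (M *ᵥ x)) =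
        (M *ᵥ x) ⬝ᵥ ((B - A) *ᵥ (M *ᵥ x)) := by
      rw [sub_mulVec, dotProduct_sub]
    rw [h1]
    calc |(M *ᵥ x) ⬝ᵥ ((B - A) *ᵥ (M *ᵥ x))|
        ≤ spec (B - A) * ((M *ᵥ x) ⬝ᵥ (M *ᵥ x)) := Aux.abs_dot_mulVec_le _ _
      _ ≤ spec (B - A) * (spec A⁻¹ * ((M *ᵥ x) ⬝ᵥ (A *ᵥ (M *ᵥ x)))) :=
          mul_le_mul_of_nonneg_left (Aux.dot_le_spec_inv hA _) (Aux.spec_nonneg _)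
      _ = spec A⁻¹ * spec (B - A) * ((M *ᵥ x) ⬝ᵥ (A *ᵥ (M *ᵥ x))) := by ring
  -- attained minimizers for the A-quantities
  obtain ⟨xz, hxz1, hxzA⟩ := Aux.lmin_attained hZAh hm
  obtain ⟨xw, hxw1, hxwA⟩ := Aux.lmin_attained hWAh (Nat.succ_pos m)
  have hlWA0 : 0 ≤ lmin ((appendCol Z y)ᵀ * A * appendCol Z y) := by
    rw [← hxwA, Aux.sandwich]; exact Aux.dotA_nonneg hA _
  have hZAle : lmin (Zᵀ * A * Z) ≤ lmax (Zᵀ * A * Z) := by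
    have h := Aux.rayleigh_le hZAh xz
    rw [hxz1, mul_one, hxzA] at h; exact h
  have hWAle : lmin ((appendCol Z y)ᵀ * A * appendCol Z y) ≤
      lmax ((appendCol Z y)ᵀ * A * appendCol Z y) := by
    have h := Aux.rayleigh_le hWAh xw
    rw [hxw1, mul_one, hxwA] at h; exact h
  have hg : 0 < lmin (Zᵀ * A * Z) - lmin ((appendCol Z y)ᵀ * A * appendCol Z y) :=
    sub_pos.mpr hgap
  have hLZA0 : 0 ≤ lmax (Zᵀ * A * Z) := le_trans (le_trans hlWA0 hgap.le) hZAle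
  have hLWA0 : 0 ≤ lmax ((appendCol Z y)ᵀ * A * appendCol Z y) := hlWA0.trans hWAle
  have hΔeq : Deltahat Z y A B =
      (lmax (Zᵀ * A * Z) + lmax ((appendCol Z y)ᵀ * A * appendCol Z y)) /
        (lmin (Zᵀ * A * Z) - lmin ((appendCol Z y)ᵀ * A * appendCol Z y)) *
        (spec A⁻¹ * spec (B - A)) := rfl
  have hΔ0 : 0 ≤ Deltahat Z y A B := by
    rw [hΔeq]
    exact mul_nonneg (div_nonneg (by linarith) hg.le) hε0
  have hεΔ : spec A⁻¹ * spec (B - A) ≤ Deltahat Z y A B := by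
    rw [hΔeq]
    have hK1 : (1 : ℝ) ≤ (lmax (Zᵀ * A * Z) + lmax ((appendCol Z y)ᵀ * A * appendCol Z y)) /
        (lmin (Zᵀ * A * Z) - lmin ((appendCol Z y)ᵀ * A * appendCol Z y)) :=
      (one_le_div hg).mpr (by linarith)
    nlinarith
  have h1Δ : 0 < 1 - Deltahat Z y A B := by linarith
  -- perturbation of the two extreme eigenvalues
  have hlminZB : lmin (Zᵀ * A * Z) - spec A⁻¹ * spec (B - A) * lmax (Zᵀ * A * Z) ≤
      lmin (Zᵀ * B * Z) := by
    obtain ⟨x, hx1, hxB⟩ := Aux.lmin_attained hZBh hm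
    have h1 := hstar Z x
    have h2 := Aux.rayleigh_ge hZAh x
    have h3 := Aux.rayleigh_le hZAh x
    rw [hx1, mul_one] at h2 h3
    rw [hxB] at h1
    have h4 := abs_le.mp h1
    nlinarith
  have hlminWB : lmin ((appendCol Z y)ᵀ * B * appendCol Z y) ≤
      lmin ((appendCol Z y)ᵀ * A * appendCol Z y) +
        spec A⁻¹ * spec (B - A) * lmax ((appendCol Z y)ᵀ * A * appendCol Z y) := by
    have h1 := hstar (appendCol Z y) xw
    rw [hxwA] at h1
    have h2 := Aux.rayleigh_ge hWBh xw
    rw [hxw1, mul_one] at h2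
    have h4 := abs_le.mp h1
    nlinarith
  -- positive lower bound on the gap for B
  have hεK : spec A⁻¹ * spec (B - A) *
      (lmax (Zᵀ * A * Z) + lmax ((appendCol Z y)ᵀ * A * appendCol Z y)) =
      Deltahat Z y A B *
        (lmin (Zᵀ * A * Z) - lmin ((appendCol Z y)ᵀ * A * appendCol Z y)) := by
    rw [hΔeq]; field_simp
  have hc₀ : (lmin (Zᵀ * A * Z) - lmin ((appendCol Z y)ᵀ * A * appendCol Z y)) *
      (1 - Deltahat Z y A B) ≤
      lmin (Zᵀ * B * Z) - lmin ((appendCol Z y)ᵀ * B * appendCol Z y) := by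
    nlinarith
  have hc₀pos : 0 < lmin (Zᵀ * B * Z) - lmin ((appendCol Z y)ᵀ * B * appendCol Z y) :=
    lt_of_lt_of_le (mul_pos hg h1Δ) hc₀
  -- the matrix gam Z y B is positive definite
  have hGray : ∀ x : Fin m → ℝ,
      (lmin (Zᵀ * B * Z) - lmin ((appendCol Z y)ᵀ * B * appendCol Z y)) * (x ⬝ᵥ x) ≤
        x ⬝ᵥ (gam Z y B *ᵥ x) := by
    intro x
    have h := Aux.rayleigh_ge hZBh x
    have hexp : gam Z y B *ᵥ x = (Zᵀ * B * Z) *ᵥ x -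
        lmin ((appendCol Z y)ᵀ * B * appendCol Z y) • x := by
      rw [gam, sub_mulVec, smul_mulVec, one_mulVec]
    rw [hexp, dotProduct_sub, dotProduct_smul, smul_eq_mul]
    nlinarith
  have hGherm : (gam Z y B).IsHermitian := by
    rw [gam]
    exact IsHermitian.sub (Aux.herm_sandwich hBh Z) (Aux.smul_one_herm _)
  have hGpd : (gam Z y B).PosDef := by
    refine Matrix.PosDef.of_dotProduct_mulVec_pos hGherm fun x hx => ?_
    have hsx : star x = x := funext fun i => star_trivial _
    rw [hsx]
    calc (0 : ℝ) < (lmin (Zᵀ * B * Z) - lmin ((appendCol Z y)ᵀ * B * appendCol Z y)) *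
          (x ⬝ᵥ x) := mul_pos hc₀pos (Aux.dot_self_pos hx)
      _ ≤ x ⬝ᵥ (gam Z y B *ᵥ x) := hGray x
  have hdet : IsUnit (gam Z y B).det := isUnit_iff_ne_zero.mpr hGpd.det_pos.ne'
  refine ⟨hdet, ?_⟩
  -- bound on the solution norm
  have hGd : gam Z y B *ᵥ betahat Z y B = del Z y B := by
    rw [betahat, mulVec_mulVec, Matrix.mul_nonsing_inv _ hdet, one_mulVec]
  have hβ : Real.sqrt (betahat Z y B ⬝ᵥ betahat Z y B) *
      (lmin (Zᵀ * B * Z) - lmin ((appendCol Z y)ᵀ * B * appendCol Z y)) ≤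
      Real.sqrt (del Z y B ⬝ᵥ del Z y B) := by
    have h1 : (lmin (Zᵀ * B * Z) - lmin ((appendCol Z y)ᵀ * B * appendCol Z y)) *
        (betahat Z y B ⬝ᵥ betahat Z y B) ≤ betahat Z y B ⬝ᵥ del Z y B := by
      rw [← hGd]; exact hGray _
    have h2 := Aux.dot_cs (betahat Z y B) (del Z y B)
    rcases eq_or_lt_of_le (Real.sqrt_nonneg (betahat Z y B ⬝ᵥ betahat Z y B)) with h0 | h0
    · rw [← h0, zero_mul]; exact Real.sqrt_nonneg _
    · have h3 : (Real.sqrt (betahat Z y B ⬝ᵥ betahat Z y B) *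
          (lmin (Zᵀ * B * Z) - lmin ((appendCol Z y)ᵀ * B * appendCol Z y))) *
          Real.sqrt (betahat Z y B ⬝ᵥ betahat Z y B) ≤
          Real.sqrt (del Z y B ⬝ᵥ del Z y B) *
          Real.sqrt (betahat Z y B ⬝ᵥ betahat Z y B) := by
        have h4 : Real.sqrt (betahat Z y B ⬝ᵥ betahat Z y B) *
            Real.sqrt (betahat Z y B ⬝ᵥ betahat Z y B) =
            betahat Z y B ⬝ᵥ betahat Z y B :=
          Real.mul_self_sqrt (Aux.dot_self_nonneg _)
        calc (Real.sqrt (betahat Z y B ⬝ᵥ betahat Z y B) *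
            (lmin (Zᵀ * B * Z) - lmin ((appendCol Z y)ᵀ * B * appendCol Z y))) *
            Real.sqrt (betahat Z y B ⬝ᵥ betahat Z y B)
            = (lmin (Zᵀ * B * Z) - lmin ((appendCol Z y)ᵀ * B * appendCol Z y)) *
              (Real.sqrt (betahat Z y B ⬝ᵥ betahat Z y B) *
                Real.sqrt (betahat Z y B ⬝ᵥ betahat Z y B)) := by ring
          _ = (lmin (Zᵀ * B * Z) - lmin ((appendCol Z y)ᵀ * B * appendCol Z y)) *
              (betahat Z y B ⬝ᵥ betahat Z y B) := by rw [h4]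
          _ ≤ betahat Z y B ⬝ᵥ del Z y B := h1
          _ ≤ Real.sqrt (betahat Z y B ⬝ᵥ betahat Z y B) *
              Real.sqrt (del Z y B ⬝ᵥ del Z y B) := h2
          _ = Real.sqrt (del Z y B ⬝ᵥ del Z y B) *
              Real.sqrt (betahat Z y B ⬝ᵥ betahat Z y B) := by ring
      exact le_of_mul_le_mul_right h3 h0
  -- bound for del Z y A
  set S := hA.posSemidef.sqrt with hS
  have hdelA : Real.sqrt (del Z y A ⬝ᵥ del Z y A) ≤
      Real.sqrt (lmax (Zᵀ * A * Z)) * Real.sqrt (y ⬝ᵥ (A *ᵥ y)) := by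
    have hfact : del Z y A = (S * Z)ᵀ *ᵥ (S *ᵥ y) := by
      rw [del, mulVec_mulVec, transpose_mul, Aux.sqrtT hA, Matrix.mul_assoc,
        hA.posSemidef.sqrt_mul_self]
    have hspecSZ : spec (S * Z) ≤ Real.sqrt (lmax (Zᵀ * A * Z)) := by
      apply Aux.spec_le_of _ _ (Real.sqrt_nonneg _)
      intro x
      rw [Real.sq_sqrt hLZA0, ← mulVec_mulVec]
      calc (S *ᵥ (Z *ᵥ x)) ⬝ᵥ (S *ᵥ (Z *ᵥ x)) = (Z *ᵥ x) ⬝ᵥ (A *ᵥ (Z *ᵥ x)) :=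
            Aux.sqrt_dot hA _
        _ = x ⬝ᵥ ((Zᵀ * A * Z) *ᵥ x) := (Aux.sandwich Z A x).symm
        _ ≤ lmax (Zᵀ * A * Z) * (x ⬝ᵥ x) := Aux.rayleigh_le hZAh x
    calc Real.sqrt (del Z y A ⬝ᵥ del Z y A)
        ≤ spec (S * Z) * Real.sqrt ((S *ᵥ y) ⬝ᵥ (S *ᵥ y)) := by
          rw [hfact]; exact Aux.mulVec_transpose_le _ _
      _ ≤ Real.sqrt (lmax (Zᵀ * A * Z)) * Real.sqrt ((S *ᵥ y) ⬝ᵥ (S *ᵥ y)) :=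
          mul_le_mul_of_nonneg_right hspecSZ (Real.sqrt_nonneg _)
      _ = Real.sqrt (lmax (Zᵀ * A * Z)) * Real.sqrt (y ⬝ᵥ (A *ᵥ y)) := by
          rw [Aux.sqrt_dot hA y]
  -- bound for the difference of dels
  have hdelDiff : Real.sqrt ((del Z y B - del Z y A) ⬝ᵥ (del Z y B - del Z y A)) ≤
      spec A⁻¹ * spec (B - A) *
        (Real.sqrt (lmax (Zᵀ * A * Z)) * Real.sqrt (y ⬝ᵥ (A *ᵥ y))) := by
    have he : del Z y B - del Z y A = Zᵀ *ᵥ ((B - A) *ᵥ y) := by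
      rw [del, del, mulVec_mulVec, ← sub_mulVec, ← Matrix.mul_sub]
    have hspecZ : spec Z ≤ Real.sqrt (spec A⁻¹ * lmax (Zᵀ * A * Z)) := by
      apply Aux.spec_le_of _ _ (Real.sqrt_nonneg _)
      intro x
      rw [Real.sq_sqrt (mul_nonneg (Aux.spec_nonneg _) hLZA0)]
      calc (Z *ᵥ x) ⬝ᵥ (Z *ᵥ x) ≤ spec A⁻¹ * ((Z *ᵥ x) ⬝ᵥ (A *ᵥ (Z *ᵥ x))) :=
            Aux.dot_le_spec_inv hA _
        _ = spec A⁻¹ * (x ⬝ᵥ ((Zᵀ * A * Z) *ᵥ x)) := by rw [Aux.sandwich Z A x]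
        _ ≤ spec A⁻¹ * (lmax (Zᵀ * A * Z) * (x ⬝ᵥ x)) :=
            mul_le_mul_of_nonneg_left (Aux.rayleigh_le hZAh x) (Aux.spec_nonneg _)
        _ = spec A⁻¹ * lmax (Zᵀ * A * Z) * (x ⬝ᵥ x) := by ring
    have hy : Real.sqrt (y ⬝ᵥ y) ≤ Real.sqrt (spec A⁻¹ * (y ⬝ᵥ (A *ᵥ y))) :=
      Real.sqrt_le_sqrt (Aux.dot_le_spec_inv hA y)
    have hsq : Real.sqrt (spec A⁻¹) * Real.sqrt (spec A⁻¹) = spec A⁻¹ :=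
      Real.mul_self_sqrt (Aux.spec_nonneg _)
    calc Real.sqrt ((del Z y B - del Z y A) ⬝ᵥ (del Z y B - del Z y A))
        ≤ spec Z * Real.sqrt (((B - A) *ᵥ y) ⬝ᵥ ((B - A) *ᵥ y)) := by
          rw [he]; exact Aux.mulVec_transpose_le _ _
      _ ≤ spec Z * (spec (B - A) * Real.sqrt (y ⬝ᵥ y)) :=
          mul_le_mul_of_nonneg_left (Aux.mulVec_spec_le _ _) (Aux.spec_nonneg _)
      _ ≤ Real.sqrt (spec A⁻¹ * lmax (Zᵀ * A * Z)) *
          (spec (B - A) * Real.sqrt (spec A⁻¹ * (y ⬝ᵥ (A *ᵥ y)))) := by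
          apply mul_le_mul hspecZ _ _ (Real.sqrt_nonneg _)
          · exact mul_le_mul_of_nonneg_left hy (Aux.spec_nonneg _)
          · exact mul_nonneg (Aux.spec_nonneg _) (Real.sqrt_nonneg _)
      _ = (Real.sqrt (spec A⁻¹) * Real.sqrt (spec A⁻¹)) * spec (B - A) *
          (Real.sqrt (lmax (Zᵀ * A * Z)) * Real.sqrt (y ⬝ᵥ (A *ᵥ y))) := by
          rw [Real.sqrt_mul (Aux.spec_nonneg _), Real.sqrt_mul (Aux.spec_nonneg _)]
          ring
      _ = spec A⁻¹ * spec (B - A) *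
          (Real.sqrt (lmax (Zᵀ * A * Z)) * Real.sqrt (y ⬝ᵥ (A *ᵥ y))) := by
          rw [hsq]
  -- combine: bound for del Z y B
  have hdelB : Real.sqrt (del Z y B ⬝ᵥ del Z y B) ≤
      (1 + Deltahat Z y A B) *
        (Real.sqrt (lmax (Zᵀ * A * Z)) * Real.sqrt (y ⬝ᵥ (A *ᵥ y))) := by
    have hsplit : del Z y B = del Z y A + (del Z y B - del Z y A) := by
      rw [add_sub_cancel]
    have htri := Aux.dot_triangle (del Z y A) (del Z y B - del Z y A)
    rw [← hsplit] at htri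
    have hT0 : 0 ≤ Real.sqrt (lmax (Zᵀ * A * Z)) * Real.sqrt (y ⬝ᵥ (A *ᵥ y)) :=
      mul_nonneg (Real.sqrt_nonneg _) (Real.sqrt_nonneg _)
    nlinarith
  -- final computation
  have hT0 : 0 ≤ Real.sqrt (lmax (Zᵀ * A * Z)) * Real.sqrt (y ⬝ᵥ (A *ᵥ y)) :=
    mul_nonneg (Real.sqrt_nonneg _) (Real.sqrt_nonneg _)
  have hUB : UB Z y A = Real.sqrt (lmax (Zᵀ * A * Z)) * Real.sqrt (y ⬝ᵥ (A *ᵥ y)) /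
      (lmin (Zᵀ * A * Z) - lmin ((appendCol Z y)ᵀ * A * appendCol Z y)) := rfl
  rw [Aux.vnorm_eq, hUB]
  have hnum : Real.sqrt (betahat Z y B ⬝ᵥ betahat Z y B) *
      ((lmin (Zᵀ * A * Z) - lmin ((appendCol Z y)ᵀ * A * appendCol Z y)) *
        (1 - Deltahat Z y A B)) ≤
      (1 + Deltahat Z y A B) *
        (Real.sqrt (lmax (Zᵀ * A * Z)) * Real.sqrt (y ⬝ᵥ (A *ᵥ y))) := by
    have h5 : Real.sqrt (betahat Z y B ⬝ᵥ betahat Z y B) *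
        ((lmin (Zᵀ * A * Z) - lmin ((appendCol Z y)ᵀ * A * appendCol Z y)) *
          (1 - Deltahat Z y A B)) ≤
        Real.sqrt (betahat Z y B ⬝ᵥ betahat Z y B) *
          (lmin (Zᵀ * B * Z) - lmin ((appendCol Z y)ᵀ * B * appendCol Z y)) :=
      mul_le_mul_of_nonneg_left hc₀ (Real.sqrt_nonneg _)
    calc _ ≤ Real.sqrt (betahat Z y B ⬝ᵥ betahat Z y B) *
          (lmin (Zᵀ * B * Z) - lmin ((appendCol Z y)ᵀ * B * appendCol Z y)) := h5
      _ ≤ Real.sqrt (del Z y B ⬝ᵥ del Z y B) := hβ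
      _ ≤ (1 + Deltahat Z y A B) *
          (Real.sqrt (lmax (Zᵀ * A * Z)) * Real.sqrt (y ⬝ᵥ (A *ᵥ y))) := hdelB
  have hden : 0 < (lmin (Zᵀ * A * Z) - lmin ((appendCol Z y)ᵀ * A * appendCol Z y)) *
      (1 - Deltahat Z y A B) := mul_pos hg h1Δ
  rw [← le_div_iff₀ hden] at hnum
  calc Real.sqrt (betahat Z y B ⬝ᵥ betahat Z y B)
      ≤ (1 + Deltahat Z y A B) *
        (Real.sqrt (lmax (Zᵀ * A * Z)) * Real.sqrt (y ⬝ᵥ (A *ᵥ y))) /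
        ((lmin (Zᵀ * A * Z) - lmin ((appendCol Z y)ᵀ * A * appendCol Z y)) *
          (1 - Deltahat Z y A B)) := hnum
    _ = (1 + Deltahat Z y A B) / (1 - Deltahat Z y A B) *
        (Real.sqrt (lmax (Zᵀ * A * Z)) * Real.sqrt (y ⬝ᵥ (A *ᵥ y)) /
          (lmin (Zᵀ * A * Z) - lmin ((appendCol Z y)ᵀ * A * appendCol Z y))) := by
        rw [div_mul_div_comm]
        ring
end

section
/- (Asymptotic variance identity for the unprewhitened estimator.) Let m be a positive integer, β ∈ ℝ^m, β̄ = (I_m, β), β̄⊥ = (−βᵀ, 1), let Q₀ and Q₁ be m×m real symmetric matrices with Q₀ invertible, let τ₂ be a real number, set M = Q₀^{-1}(β̄β̄ᵀ)^{-1}β̄ and N_{m+1} = (I_{(m+1)²} + K_{m+1,m+1})/2. Then [β̄⊥ ⊗ M] · {2τ₂·N_{m+1} + 4·N_{m+1}·(I_{m+1} ⊗ (β̄ᵀQ₁β̄))·N_{m+1}} · [(β̄⊥)ᵀ ⊗ Mᵀ] = (1 + βᵀβ) · Q₀^{-1}{Q₁ + τ₂(I_m + ββᵀ)^{-1}}Q₀^{-1}.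 -/
open Matrix

/-- `β̄ = (I_m, β)`: the `m × (m+1)` matrix obtained by appending `β` as a last
column to the identity matrix `I_m`. -/
def bbar {m : ℕ} (β : Fin m → ℝ) : Matrix (Fin m) (Fin (m + 1)) ℝ :=
  Matrix.of fun i j => Fin.lastCases (β i) (fun k => (1 : Matrix (Fin m) (Fin m) ℝ) i k) j

/-- The vector `(−βᵀ, 1)ᵀ ∈ ℝ^{m+1}` with entries `−β₁, …, −β_m, 1`. -/
def bperpVec {m : ℕ} (β : Fin m → ℝ) : Fin (m + 1) → ℝ :=
  fun j => Fin.lastCases 1 (fun k => -β k) j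

open scoped Kronecker

/-- The row vector `β̄⊥ = (−βᵀ, 1)`, as a `1 × (m+1)` matrix. -/
def bperpRow {m : ℕ} (β : Fin m → ℝ) : Matrix (Fin 1) (Fin (m + 1)) ℝ :=
  Matrix.of fun _ j => Fin.lastCases 1 (fun k => -β k) j

/-- Column-major vectorization of a matrix: `vec A` is indexed by (column, row)
pairs, so that under the lexicographic identification it stacks the columns. -/
def vecCol {n q : ℕ} (A : Matrix (Fin n) (Fin q) ℝ) : Fin q × Fin n → ℝ :=
  fun s => A s.2 s.1

/-- The commutation matrix `K_{n,q}`: the unique `nq × nq` matrix with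
`K_{n,q} · vec A = vec Aᵀ` for every `n × q` real matrix `A`. -/
def commMatrix (n q : ℕ) : Matrix (Fin n × Fin q) (Fin q × Fin n) ℝ :=
  Matrix.of fun s t => if s.1 = t.2 ∧ s.2 = t.1 then 1 else 0

/-- The defining property of the commutation matrix. -/
theorem commMatrix_mulVec_vecCol {n q : ℕ} (A : Matrix (Fin n) (Fin q) ℝ) :
    commMatrix n q *ᵥ vecCol A = vecCol Aᵀ := by
  funext s
  simp only [commMatrix, vecCol, mulVec, dotProduct, Fintype.sum_prod_type, Matrix.of_apply,
    Matrix.transpose_apply]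
  rw [Finset.sum_comm]
  rw [Finset.sum_eq_single s.1 (by intro b _ hb; exact Finset.sum_eq_zero (by intro c _; simp [hb, Ne.symm]) ) (by simp)]
  rw [Finset.sum_eq_single s.2 (by intro b _ hb; simp [hb, Ne.symm]) (by simp)]
  simp

lemma bbar_mul_bperp {m : ℕ} (β : Fin m → ℝ) : bbar β * (bperpRow β)ᵀ = 0 := by
  ext i j
  simp only [mul_apply, transpose_apply, bbar, bperpRow, of_apply, Matrix.zero_apply]
  rw [Fin.sum_univ_castSucc]
  simp [Matrix.one_apply, Finset.sum_ite_eq]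

lemma bperp_mul_bperp {m : ℕ} (β : Fin m → ℝ) :
    bperpRow β * (bperpRow β)ᵀ = (1 + β ⬝ᵥ β) • 1 := by
  ext i j
  simp only [mul_apply, transpose_apply, bperpRow, of_apply, Matrix.smul_apply, one_apply,
    Subsingleton.elim i j, if_pos rfl]
  rw [Fin.sum_univ_castSucc]
  simp [dotProduct, add_comm, mul_comm]

lemma bbar_mul_bbar {m : ℕ} (β : Fin m → ℝ) :
    bbar β * (bbar β)ᵀ = 1 + Matrix.vecMulVec β β := by
  ext i j
  simp only [mul_apply, transpose_apply, bbar, of_apply, Matrix.add_apply, vecMulVec_apply]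
  rw [Fin.sum_univ_castSucc]
  simp [Matrix.one_apply, Finset.sum_ite_eq]

lemma commMatrix_mul_kron {p q n r : ℕ} (A : Matrix (Fin p) (Fin n) ℝ)
    (B : Matrix (Fin q) (Fin r) ℝ) :
    commMatrix p q * (B ⊗ₖ A) = (A ⊗ₖ B) * commMatrix n r := by
  ext ⟨i, j⟩ ⟨s, t⟩
  simp only [mul_apply, commMatrix, kroneckerMap_apply, of_apply, Fintype.sum_prod_type]
  rw [Finset.sum_eq_single j (by intro u _ hu; exact Finset.sum_eq_zero (by intro v _; simp [Ne.symm hu]))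
    (by simp)]
  rw [Finset.sum_eq_single i (by intro v _ hv; simp [Ne.symm hv]) (by simp)]
  rw [Finset.sum_eq_single t (by intro u _ hu; exact Finset.sum_eq_zero (by intro v _; simp [hu]))
    (by simp)]
  rw [Finset.sum_eq_single s (by intro v _ hv; simp [hv]) (by simp)]
  simp [mul_comm]

lemma vecMulVec_mul_vecMulVec' {m : ℕ} (β : Fin m → ℝ) :
    Matrix.vecMulVec β β * Matrix.vecMulVec β β = (β ⬝ᵥ β) • Matrix.vecMulVec β β := by
  ext i j
  simp only [mul_apply, vecMulVec_apply, Matrix.smul_apply, smul_eq_mul, dotProduct]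
  rw [Finset.sum_mul]
  exact Finset.sum_congr rfl fun k _ => by ring

lemma isUnit_det_one_add_vmv {m : ℕ} (β : Fin m → ℝ) :
    IsUnit (1 + Matrix.vecMulVec β β).det := by
  have hd : (0:ℝ) ≤ β ⬝ᵥ β := Finset.sum_nonneg fun i _ => mul_self_nonneg _
  have hc : (1 + β ⬝ᵥ β) ≠ 0 := by positivity
  apply Matrix.isUnit_det_of_right_inverse
    (B := 1 - (1 + β ⬝ᵥ β)⁻¹ • Matrix.vecMulVec β β)
  have h1 : (1 + Matrix.vecMulVec β β) * ((1 + β ⬝ᵥ β)⁻¹ • Matrix.vecMulVec β β)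
      = Matrix.vecMulVec β β := by
    rw [mul_smul_comm, add_mul, one_mul, vecMulVec_mul_vecMulVec', smul_add, smul_smul,
      ← add_smul]
    have : (1 + β ⬝ᵥ β)⁻¹ + (1 + β ⬝ᵥ β)⁻¹ * (β ⬝ᵥ β) = 1 := by field_simp
    rw [this, one_smul]
  rw [mul_sub, mul_one, h1, add_sub_cancel_right]


set_option maxHeartbeats 1000000 in
/-- Asymptotic variance identity for the unprewhitened estimator: with
`M = Q₀⁻¹(β̄β̄ᵀ)⁻¹β̄` and `N_{m+1} = (I_{(m+1)²} + K_{m+1,m+1})/2`,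
`[β̄⊥ ⊗ M]·{2τ₂N_{m+1} + 4N_{m+1}(I_{m+1} ⊗ (β̄ᵀQ₁β̄))N_{m+1}}·[(β̄⊥)ᵀ ⊗ Mᵀ]
  = (1 + βᵀβ)·Q₀⁻¹{Q₁ + τ₂(I_m + ββᵀ)⁻¹}Q₀⁻¹`. -/
theorem stmt11 {m : ℕ} (hm : 0 < m) (β : Fin m → ℝ)
    (Q0 Q1 : Matrix (Fin m) (Fin m) ℝ) (hQ0symm : Q0.IsSymm) (hQ1symm : Q1.IsSymm)
    (hQ0 : IsUnit Q0.det) (τ₂ : ℝ) :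
    ∀ a b : Fin 1 × Fin m,
      ((bperpRow β ⊗ₖ (Q0⁻¹ * (bbar β * (bbar β)ᵀ)⁻¹ * bbar β)) *
          ((2 * τ₂) •
              ((2 : ℝ)⁻¹ • ((1 : Matrix ((Fin (m + 1)) × (Fin (m + 1)))
                  ((Fin (m + 1)) × (Fin (m + 1))) ℝ) + commMatrix (m + 1) (m + 1))) +
            (4 : ℝ) •
              (((2 : ℝ)⁻¹ • ((1 : Matrix ((Fin (m + 1)) × (Fin (m + 1)))
                    ((Fin (m + 1)) × (Fin (m + 1))) ℝ) + commMatrix (m + 1) (m + 1))) *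
                ((1 : Matrix (Fin (m + 1)) (Fin (m + 1)) ℝ) ⊗ₖ ((bbar β)ᵀ * Q1 * bbar β)) *
                ((2 : ℝ)⁻¹ • ((1 : Matrix ((Fin (m + 1)) × (Fin (m + 1)))
                    ((Fin (m + 1)) × (Fin (m + 1))) ℝ) + commMatrix (m + 1) (m + 1))))) *
          ((bperpRow β)ᵀ ⊗ₖ (Q0⁻¹ * (bbar β * (bbar β)ᵀ)⁻¹ * bbar β)ᵀ)) a b =
        ((1 + β ⬝ᵥ β) •
            (Q0⁻¹ * (Q1 + τ₂ • (1 + Matrix.vecMulVec β β)⁻¹) * Q0⁻¹)) a.2 b.2 := by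
  set bp := bperpRow β with hbpdef
  set B := bbar β with hBdef
  set G : Matrix (Fin m) (Fin m) ℝ := 1 + Matrix.vecMulVec β β with hGdef
  set M : Matrix (Fin m) (Fin (m + 1)) ℝ := Q0⁻¹ * (B * Bᵀ)⁻¹ * B with hMdef
  set C : Matrix (Fin (m + 1)) (Fin (m + 1)) ℝ := Bᵀ * Q1 * B with hCdef
  set E : Matrix ((Fin (m + 1)) × (Fin (m + 1))) ((Fin (m + 1)) × (Fin (m + 1))) ℝ :=
    1 + commMatrix (m + 1) (m + 1) with hEdef
  clear_value bp B G M C E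
  -- basic facts
  have hG : B * Bᵀ = G := by rw [hBdef, hGdef]; exact bbar_mul_bbar β
  have hGdet : IsUnit G.det := by rw [hGdef]; exact isUnit_det_one_add_vmv β
  have hGG : G⁻¹ * G = 1 := Matrix.nonsing_inv_mul _ hGdet
  have hGsymm : Gᵀ = G := by
    rw [hGdef, Matrix.transpose_add, Matrix.transpose_one]
    congr 1
    ext i j
    simp [Matrix.vecMulVec_apply, mul_comm]
  have hBb : B * bpᵀ = 0 := by rw [hBdef, hbpdef]; exact bbar_mul_bperp β
  have hbBt : bp * Bᵀ = 0 := by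
    have h := congrArg Matrix.transpose hBb
    simpa using h
  have hbb : bp * bpᵀ = (1 + β ⬝ᵥ β) • 1 := by rw [hbpdef]; exact bperp_mul_bperp β
  have hM' : M = Q0⁻¹ * G⁻¹ * B := by rw [hMdef, hG]
  have hMt : Mᵀ = Bᵀ * (G⁻¹ * Q0⁻¹) := by
    rw [hM', Matrix.transpose_mul, Matrix.transpose_mul, Matrix.transpose_nonsing_inv,
      Matrix.transpose_nonsing_inv, hGsymm, hQ0symm.eq]
  have hBX : ∀ X : Matrix (Fin m) (Fin m) ℝ, B * (Bᵀ * X) = G * X := fun X => by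
    rw [← Matrix.mul_assoc, hG]
  have hGiX : ∀ X : Matrix (Fin m) (Fin m) ℝ, G⁻¹ * (G * X) = X := fun X => by
    rw [← Matrix.mul_assoc, hGG, one_mul]
  have hGX : ∀ X : Matrix (Fin m) (Fin m) ℝ, G * (G⁻¹ * X) = X := fun X => by
    rw [← Matrix.mul_assoc, Matrix.mul_nonsing_inv _ hGdet, one_mul]
  have hMb : M * bpᵀ = 0 := by
    rw [hM']
    simp only [Matrix.mul_assoc]
    rw [hBb, Matrix.mul_zero, Matrix.mul_zero]
  have hbM : bp * Mᵀ = 0 := by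
    have h := congrArg Matrix.transpose hMb
    simpa using h
  have hbC : bp * C = 0 := by
    rw [hCdef, ← Matrix.mul_assoc, ← Matrix.mul_assoc, hbBt, Matrix.zero_mul, Matrix.zero_mul]
  have hMM : M * Mᵀ = Q0⁻¹ * (G⁻¹ * Q0⁻¹) := by
    rw [hMt, hM']
    simp only [Matrix.mul_assoc]
    rw [hBX, hGiX]
  have hMCM : M * C * Mᵀ = Q0⁻¹ * (Q1 * Q0⁻¹) := by
    rw [hMt, hCdef, hM']
    simp only [Matrix.mul_assoc]
    rw [hBX, hBX, hGX, hGiX]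
  -- the two key one-sided multiplications
  have hL : (bp ⊗ₖ M) * E = (bp ⊗ₖ M) + commMatrix 1 m * (M ⊗ₖ bp) := by
    rw [hEdef, Matrix.mul_add, Matrix.mul_one, ← commMatrix_mul_kron]
  have hR : E * (bpᵀ ⊗ₖ Mᵀ) = (bpᵀ ⊗ₖ Mᵀ) + (Mᵀ ⊗ₖ bpᵀ) * commMatrix m 1 := by
    rw [hEdef, Matrix.add_mul, Matrix.one_mul, commMatrix_mul_kron]
  have h1 : (bp ⊗ₖ M) * E * (bpᵀ ⊗ₖ Mᵀ) = (bp * bpᵀ) ⊗ₖ (M * Mᵀ) := by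
    rw [hL, Matrix.add_mul, ← mul_kronecker_mul, Matrix.mul_assoc, ← mul_kronecker_mul, hMb,
      Matrix.zero_kronecker, Matrix.mul_zero, add_zero]
  have h2 : (bp ⊗ₖ M) * E * ((1 : Matrix (Fin (m + 1)) (Fin (m + 1)) ℝ) ⊗ₖ C)
      = bp ⊗ₖ (M * C) := by
    rw [hL, Matrix.add_mul, ← mul_kronecker_mul, Matrix.mul_assoc, ← mul_kronecker_mul, hbC,
      Matrix.kronecker_zero, Matrix.mul_zero, add_zero, Matrix.mul_one]
  have h3 : (bp ⊗ₖ (M * C)) * (E * (bpᵀ ⊗ₖ Mᵀ)) = (bp * bpᵀ) ⊗ₖ (M * C * Mᵀ) := by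
    rw [hR, Matrix.mul_add, ← mul_kronecker_mul, ← Matrix.mul_assoc, ← mul_kronecker_mul, hbM,
      Matrix.zero_kronecker, Matrix.zero_mul, add_zero]
  have hfinal : Q0⁻¹ * (Q1 + τ₂ • G⁻¹) * Q0⁻¹
      = Q0⁻¹ * (Q1 * Q0⁻¹) + τ₂ • (Q0⁻¹ * (G⁻¹ * Q0⁻¹)) := by
    rw [mul_add, add_mul, mul_smul_comm, smul_mul_assoc, Matrix.mul_assoc, Matrix.mul_assoc]
  have key : (bp ⊗ₖ M) *
      ((2 * τ₂) • ((2 : ℝ)⁻¹ • E) +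
        (4 : ℝ) • (((2 : ℝ)⁻¹ • E) *
          ((1 : Matrix (Fin (m + 1)) (Fin (m + 1)) ℝ) ⊗ₖ C) * ((2 : ℝ)⁻¹ • E))) *
      (bpᵀ ⊗ₖ Mᵀ) =
      (1 : Matrix (Fin 1) (Fin 1) ℝ) ⊗ₖ
        ((1 + β ⬝ᵥ β) • (Q0⁻¹ * (Q1 + τ₂ • G⁻¹) * Q0⁻¹)) := by
    have hS : (2 * τ₂) • ((2 : ℝ)⁻¹ • E) +
        (4 : ℝ) • (((2 : ℝ)⁻¹ • E) *
          ((1 : Matrix (Fin (m + 1)) (Fin (m + 1)) ℝ) ⊗ₖ C) * ((2 : ℝ)⁻¹ • E)) =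
        τ₂ • E + E * ((1 : Matrix (Fin (m + 1)) (Fin (m + 1)) ℝ) ⊗ₖ C) * E := by
      simp only [smul_mul_assoc, mul_smul_comm]
      module
    rw [hS]
    calc (bp ⊗ₖ M) * (τ₂ • E + E * ((1 : Matrix (Fin (m + 1)) (Fin (m + 1)) ℝ) ⊗ₖ C) * E) *
        (bpᵀ ⊗ₖ Mᵀ)
        = τ₂ • ((bp ⊗ₖ M) * E * (bpᵀ ⊗ₖ Mᵀ)) +
          ((bp ⊗ₖ M) * E * ((1 : Matrix (Fin (m + 1)) (Fin (m + 1)) ℝ) ⊗ₖ C)) *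
            (E * (bpᵀ ⊗ₖ Mᵀ)) := by
          rw [Matrix.mul_add, Matrix.add_mul, Matrix.mul_smul, Matrix.smul_mul,
            ← Matrix.mul_assoc (bp ⊗ₖ M)
              (E * ((1 : Matrix (Fin (m + 1)) (Fin (m + 1)) ℝ) ⊗ₖ C)) E,
            ← Matrix.mul_assoc (bp ⊗ₖ M) E ((1 : Matrix (Fin (m + 1)) (Fin (m + 1)) ℝ) ⊗ₖ C),
            Matrix.mul_assoc ((bp ⊗ₖ M) * E * ((1 : Matrix (Fin (m + 1)) (Fin (m + 1)) ℝ) ⊗ₖ C))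
              E (bpᵀ ⊗ₖ Mᵀ)]
      _ = τ₂ • ((bp * bpᵀ) ⊗ₖ (M * Mᵀ)) + (bp * bpᵀ) ⊗ₖ (M * C * Mᵀ) := by
          rw [h1, h2, h3]
      _ = (1 : Matrix (Fin 1) (Fin 1) ℝ) ⊗ₖ
            ((1 + β ⬝ᵥ β) • (Q0⁻¹ * (Q1 + τ₂ • G⁻¹) * Q0⁻¹)) := by
          rw [hbb, hMM, hMCM, hfinal]
          simp only [smul_add, Matrix.kronecker_add, Matrix.kronecker_smul,
            Matrix.smul_kronecker]
          module
  intro a b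
  rw [key]
  have hab : a.1 = b.1 := Subsingleton.elim _ _
  simp [Matrix.kroneckerMap_apply, Matrix.one_apply, hab]
end

section
/- (The unprewhitened estimator can be asymptotically more efficient than the prewhitened one.) Let p be a positive integer, β₁ ∈ ℝ, σ_max² > 0, and for i = 1,…,p let 0 < σ_i² < σ_max². Define c_i = σ_i²/{(1+β₁²)(σ_max² − σ_i²)} > 0. Then (∑_{i=1}^p {1 + (1+β₁²)c_i})/(∑_{i=1}^p c_i)² ≥ 1/(∑_{i=1}^p c_i²/{1 + (1+β₁²)c_i}), with equality if and only if σ_1² = σ_2² = ⋯ = σ_p². -/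
/-- In the setting of Example 2 of the paper (`x_i² = σ_i⁴/{(1+β₁²)(σ_max² − σ_i²)}`),
`c_i = x_i²/σ_i² = σ_i²/{(1+β₁²)(σ_max² − σ_i²)}`, where `σ2 i` denotes `σ_i²`. -/
noncomputable def cEx {p : ℕ} (β₁ σmax2 : ℝ) (σ2 : Fin p → ℝ) (i : Fin p) : ℝ :=
  σ2 i / ((1 + β₁ ^ 2) * (σmax2 - σ2 i))

/-- The unprewhitened estimator can be asymptotically more efficient than the
prewhitened one: `AMSE(β̂(Σ⁻¹)) = (∑{1+(1+β₁²)c_i})/(∑c_i)²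
  ≥ 1/(∑ c_i²/{1+(1+β₁²)c_i}) = AMSE(β̂(I_p))`,
with equality iff `σ_1² = ⋯ = σ_p²`. -/
theorem stmt15 {p : ℕ} (hp : 0 < p) (β₁ σmax2 : ℝ) (hσmax : 0 < σmax2)
    (σ2 : Fin p → ℝ) (hσpos : ∀ i, 0 < σ2 i) (hσlt : ∀ i, σ2 i < σmax2) :
    (∑ i, (1 + (1 + β₁ ^ 2) * cEx β₁ σmax2 σ2 i)) / (∑ i, cEx β₁ σmax2 σ2 i) ^ 2 ≥
        1 / (∑ i, (cEx β₁ σmax2 σ2 i) ^ 2 / (1 + (1 + β₁ ^ 2) * cEx β₁ σmax2 σ2 i)) ∧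
      ((∑ i, (1 + (1 + β₁ ^ 2) * cEx β₁ σmax2 σ2 i)) / (∑ i, cEx β₁ σmax2 σ2 i) ^ 2 =
          1 / (∑ i, (cEx β₁ σmax2 σ2 i) ^ 2 / (1 + (1 + β₁ ^ 2) * cEx β₁ σmax2 σ2 i)) ↔
        ∀ i j, σ2 i = σ2 j) := by
  have hne : (Finset.univ : Finset (Fin p)).Nonempty := by
    simpa [Finset.univ_nonempty_iff] using Fin.pos_iff_nonempty.mp hp
  set k : ℝ := 1 + β₁ ^ 2 with hkdef
  have hk : 0 < k := by positivity
  set c : Fin p → ℝ := cEx β₁ σmax2 σ2 with hcdef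
  have hc : ∀ i, 0 < c i := fun i => by
    have := hσpos i; have := hσlt i
    have hden : 0 < k * (σmax2 - σ2 i) := by
      apply mul_pos hk; linarith
    exact div_pos (hσpos i) hden
  set a : Fin p → ℝ := fun i => 1 + k * c i with hadef
  have ha : ∀ i, 0 < a i := fun i => by
    have := hc i; have := hk.le; simp only [hadef]; nlinarith
  set S : ℝ := ∑ i, a i with hSdef
  set U : ℝ := ∑ i, c i with hUdef
  set T : ℝ := ∑ i, (c i) ^ 2 / a i with hTdef
  have hS : 0 < S := Finset.sum_pos (fun i _ => ha i) hne
  have hU : 0 < U := Finset.sum_pos (fun i _ => hc i) hne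
  have hT : 0 < T := Finset.sum_pos (fun i _ => div_pos (pow_pos (hc i) 2) (ha i)) hne
  -- key identity
  have key : ∑ i, (c i * S - a i * U) ^ 2 / a i = S ^ 2 * T - S * U ^ 2 := by
    have h1 : ∀ i : Fin p, (c i * S - a i * U) ^ 2 / a i
        = S ^ 2 * ((c i) ^ 2 / a i) - (2 * S * U) * c i + U ^ 2 * a i := by
      intro i
      have hai := (ha i).ne'
      field_simp
      ring
    calc ∑ i, (c i * S - a i * U) ^ 2 / a i
        = ∑ i, (S ^ 2 * ((c i) ^ 2 / a i) - (2 * S * U) * c i + U ^ 2 * a i) := by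
          exact Finset.sum_congr rfl fun i _ => h1 i
      _ = S ^ 2 * T - (2 * S * U) * U + U ^ 2 * S := by
          simp [Finset.sum_add_distrib, Finset.sum_sub_distrib, ← Finset.mul_sum,
            hTdef, hUdef, hSdef]
      _ = S ^ 2 * T - S * U ^ 2 := by ring
  have hnonneg : 0 ≤ ∑ i, (c i * S - a i * U) ^ 2 / a i :=
    Finset.sum_nonneg fun i _ => div_nonneg (sq_nonneg _) (ha i).le
  have hineq : U ^ 2 ≤ S * T := by nlinarith [key, hnonneg]
  refine ⟨?_, ?_⟩
  · rw [ge_iff_le, div_le_div_iff₀ hT (pow_pos hU 2)]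
    linarith
  · rw [div_eq_div_iff (pow_pos hU 2).ne' hT.ne']
    constructor
    · intro hEq
      have hzero : ∑ i, (c i * S - a i * U) ^ 2 / a i = 0 := by
        rw [key]; linear_combination S * hEq
      have hterm : ∀ i : Fin p, c i * S = a i * U := by
        intro i
        have h0 := (Finset.sum_eq_zero_iff_of_nonneg
          (fun i _ => div_nonneg (sq_nonneg ((c i * S - a i * U))) (ha i).le)).mp hzero i
          (Finset.mem_univ i)
        have hai := (ha i).ne'
        rw [div_eq_zero_iff] at h0
        rcases h0 with h0 | h0
        · have := pow_eq_zero_iff (n := 2) (by norm_num) |>.mp h0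
          linarith
        · exact absurd h0 hai
      intro i j
      -- first c i = c j
      have hcc : c i = c j := by
        have hi := hterm i
        have hj := hterm j
        have h1 : c i * (a j * U) = c j * (a i * U) := by
          calc c i * (a j * U) = c i * (c j * S) := by rw [hj]
            _ = c j * (c i * S) := by ring
            _ = c j * (a i * U) := by rw [hi]
        have h2 : c i * a j = c j * a i := by
          apply mul_right_cancel₀ hU.ne'
          linear_combination h1
        simp only [hadef] at h2
        linear_combination h2
      -- then σ2 i = σ2 j
      have hdi : 0 < k * (σmax2 - σ2 i) := mul_pos hk (by linarith [hσlt i])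
      have hdj : 0 < k * (σmax2 - σ2 j) := mul_pos hk (by linarith [hσlt j])
      have hcc' : σ2 i / (k * (σmax2 - σ2 i)) = σ2 j / (k * (σmax2 - σ2 j)) := hcc
      rw [div_eq_div_iff hdi.ne' hdj.ne'] at hcc'
      have h5 : σ2 i * σmax2 = σ2 j * σmax2 := by nlinarith [hcc', hk]
      exact mul_right_cancel₀ hσmax.ne' h5
    · intro hall
      have hcc : ∀ i j : Fin p, c i = c j := by
        intro i j
        simp only [hcdef, cEx, hall i j]
      have hterm : ∀ i : Fin p, c i * S = a i * U := by
        intro i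
        rw [hSdef, hUdef, Finset.mul_sum, Finset.mul_sum]
        refine Finset.sum_congr rfl fun j _ => ?_
        have h := hcc i j
        simp only [hadef]
        rw [h]; ring
      have hzero : ∑ i, (c i * S - a i * U) ^ 2 / a i = 0 :=
        Finset.sum_eq_zero fun i _ => by rw [hterm i]; simp
      rw [key] at hzero
      have h4 : S * (S * T - U ^ 2) = 0 := by linear_combination hzero
      rcases mul_eq_zero.mp h4 with h | h
      · exact absurd h hS.ne'
      · linarith
end
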